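/- arXiv:1911.05396 — 6 statements merged into one kernel-verified Lean document; each statement's English description precedes it below -/
import Mathlib

section
/- Let {V_k} be a sequence of real numbers and {ω_k} a sequence of nonnegative real numbers with ω_k = 0 for k < 0. Suppose there exist real numbers a ∈ (0,1), b ≥ 0, c ≥ 0 and a positive integer k₀ such that for all k ≥ 0, V_k ≥ (1/a) V_{k+1} + b ω_k − c Σ_{j=k−k₀}^{k} ω_j. If (c/(1−a)) · (1−a^{k₀+1})/a^{k₀} ≤ b, then V_k ≤ a^k V_0 for all k ≥ 0. -/
open scoped RealInnerProductSpace
open Filter Topology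

noncomputable section

/-- `L`-smoothness of a real-valued function, in the sense of assumption A1:
differentiability together with the two-sided quadratic bound. -/
def LSmooth {d : ℕ} (g : EuclideanSpace ℝ (Fin d) → ℝ) (L : ℝ) : Prop :=
  Differentiable ℝ g ∧
    ∀ x y : EuclideanSpace ℝ (Fin d),
      |g y - g x - ⟪gradient g x, y - x⟫| ≤ L / 2 * ‖y - x‖ ^ 2

/-- Assumption B1: `δ`-strong convexity in the weak sense (`δ` may be negative). -/
def WeakStrConvex {d : ℕ} (g : EuclideanSpace ℝ (Fin d) → ℝ) (δ : ℝ) : Prop :=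
  ∀ x y : EuclideanSpace ℝ (Fin d),
    g x + ⟪gradient g x, y - x⟫ + δ / 2 * ‖y - x‖ ^ 2 ≤ g y

/-- Properness of an `EReal`-valued function: finite somewhere and never `⊥`. -/
def EProper {d : ℕ} (g : EuclideanSpace ℝ (Fin d) → EReal) : Prop :=
  (∃ z, g z ≠ ⊤) ∧ ∀ z, g z ≠ ⊥

/-- Convexity of an `EReal`-valued function. -/
def EConvexFn {d : ℕ} (g : EuclideanSpace ℝ (Fin d) → EReal) : Prop :=
  ∀ z w : EuclideanSpace ℝ (Fin d), ∀ a b : ℝ, 0 ≤ a → 0 ≤ b → a + b = 1 →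
    g (a • z + b • w) ≤ (a : EReal) * g z + (b : EReal) * g w

/-- Assumption B2: `γ`-strong convexity of an `EReal`-valued function, stated via
subgradients: for every subgradient `v` of `g` at `z` one has the quadratic lower bound. -/
def EStrongConvexFn {d : ℕ} (g : EuclideanSpace ℝ (Fin d) → EReal) (γ : ℝ) : Prop :=
  ∀ z v : EuclideanSpace ℝ (Fin d),
    (∀ u, g z + ((⟪v, u - z⟫ : ℝ) : EReal) ≤ g u) →
      ∀ u, g z + ((⟪v, u - z⟫ + γ / 2 * ‖u - z‖ ^ 2 : ℝ) : EReal) ≤ g u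

/-- `p = Prox_g(z)`: `p` minimizes `u ↦ g u + ‖u - z‖² / 2`. -/
def IsProxPt {d : ℕ} (g : EuclideanSpace ℝ (Fin d) → EReal)
    (z p : EuclideanSpace ℝ (Fin d)) : Prop :=
  ∀ u, g p + ((‖p - z‖ ^ 2 / 2 : ℝ) : EReal) ≤ g u + ((‖u - z‖ ^ 2 / 2 : ℝ) : EReal)

/-- The Lagrangian `L(x, y) = f x + ⟪K x, y⟫ - h*(y)`, valued in `EReal`. -/
def Lagr {d₁ d₂ : ℕ} (f : EuclideanSpace ℝ (Fin d₁) → ℝ)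
    (hstar : EuclideanSpace ℝ (Fin d₂) → EReal)
    (K : EuclideanSpace ℝ (Fin d₁) →L[ℝ] EuclideanSpace ℝ (Fin d₂))
    (x : EuclideanSpace ℝ (Fin d₁)) (y : EuclideanSpace ℝ (Fin d₂)) : EReal :=
  (f x : EReal) + ((⟪K x, y⟫ : ℝ) : EReal) - hstar y

/-- `(xh, yh)` is a saddle point of `Lg`. -/
def IsSaddlePt {d₁ d₂ : ℕ}
    (Lg : EuclideanSpace ℝ (Fin d₁) → EuclideanSpace ℝ (Fin d₂) → EReal)
    (xh : EuclideanSpace ℝ (Fin d₁)) (yh : EuclideanSpace ℝ (Fin d₂)) : Prop :=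
  ∀ (x : EuclideanSpace ℝ (Fin d₁)) (y : EuclideanSpace ℝ (Fin d₂)),
    Lg xh y ≤ Lg xh yh ∧ Lg xh yh ≤ Lg x yh

/-- Lemma 1: linear-rate recursion lemma (variant of Aytekin et al. without
nonnegativity of `V`). -/
theorem stmt_0 (V : ℕ → ℝ) (ω : ℤ → ℝ) (a b c : ℝ) (k₀ : ℕ)
    (ha : a ∈ Set.Ioo (0 : ℝ) 1) (hb : 0 ≤ b) (hc : 0 ≤ c) (hk₀ : 0 < k₀)
    (hωpos : ∀ k : ℤ, 0 ≤ ω k) (hωneg : ∀ k : ℤ, k < 0 → ω k = 0)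
    (hrec : ∀ k : ℕ, V k ≥ (1 / a) * V (k + 1) + b * ω k
      - c * ∑ j ∈ Finset.Icc ((k : ℤ) - (k₀ : ℤ)) (k : ℤ), ω j)
    (hcond : c / (1 - a) * ((1 - a ^ (k₀ + 1)) / a ^ k₀) ≤ b) :
    ∀ k : ℕ, V k ≤ a ^ k * V 0 := by
  obtain ⟨ha0, ha1⟩ := ha
  set r : ℝ := a⁻¹ with hrdef
  have hr0 : 0 < r := inv_pos.mpr ha0
  have har : a * r = 1 := mul_inv_cancel₀ (ne_of_gt ha0)
  set S : ℕ → ℝ := fun k => ∑ j ∈ Finset.Icc ((k : ℤ) - (k₀ : ℤ)) (k : ℤ), ω j with hSdef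
  have hS' : ∀ k : ℕ, S k = ∑ i ∈ Finset.range (k₀ + 1), ω ((k : ℤ) - (i : ℤ)) := by
    intro k
    rw [hSdef]
    refine Finset.sum_nbij' (fun j => ((k : ℤ) - j).toNat) (fun i => (k : ℤ) - (i : ℤ))
      ?_ ?_ ?_ ?_ ?_
    · intro j hj
      simp only [Finset.mem_Icc] at hj
      simp only [Finset.mem_range]
      omega
    · intro i hi
      simp only [Finset.mem_range] at hi
      simp only [Finset.mem_Icc]
      omega
    · intro j hj
      simp only [Finset.mem_Icc] at hj
      show (k : ℤ) - (((k : ℤ) - j).toNat : ℤ) = j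
      omega
    · intro i hi
      simp only [Finset.mem_range] at hi
      show ((k : ℤ) - ((k : ℤ) - (i : ℤ))).toNat = i
      omega
    · intro j hj
      simp only [Finset.mem_Icc] at hj
      show ω j = ω ((k : ℤ) - ((((k : ℤ) - j).toNat : ℕ) : ℤ))
      congr 1
      omega
  have hstep : ∀ k : ℕ, V (k + 1) ≤ a * V k + a * (c * S k - b * ω k) := by
    intro k
    have h := mul_le_mul_of_nonneg_left (hrec k) ha0.le
    have h2 : a * ((1 / a) * V (k + 1) + b * ω k - c * S k)
        = V (k + 1) + a * (b * ω k) - a * (c * S k) := by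
      field_simp
    rw [h2] at h
    linarith
  set D : ℕ → ℝ := fun N => ∑ k ∈ Finset.range N, r ^ k * (c * S k - b * ω k) with hDdef
  have hmain : ∀ N : ℕ, V N ≤ a ^ N * (V 0 + D N) := by
    intro N
    induction N with
    | zero => simp [hDdef]
    | succ N ih =>
      have h1 := hstep N
      have harN : a ^ (N + 1) * r ^ N = a := by
        have h3 : a ^ (N + 1) * r ^ N = a * (a * r) ^ N := by rw [mul_pow]; ring
        rw [h3, har, one_pow, mul_one]
      have h2 : a ^ (N + 1) * (V 0 + D (N + 1))
          = a * (a ^ N * (V 0 + D N)) + a * (c * S N - b * ω N) := by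
        simp only [hDdef, Finset.sum_range_succ]
        calc a ^ (N + 1) * (V 0 + (∑ k ∈ Finset.range N, r ^ k * (c * S k - b * ω k)
              + r ^ N * (c * S N - b * ω N)))
            = a * (a ^ N * (V 0 + ∑ k ∈ Finset.range N, r ^ k * (c * S k - b * ω k)))
              + (a ^ (N + 1) * r ^ N) * (c * S N - b * ω N) := by ring
          _ = _ := by rw [harN]
      rw [h2]
      have h4 := mul_le_mul_of_nonneg_left ih ha0.le
      linarith
  have hpos : ∀ N : ℕ, (0 : ℝ) < a ^ N := fun N => pow_pos ha0 N
  have hDle : ∀ N : ℕ, D N ≤ 0 := by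
    intro N
    set A : ℝ := ∑ m ∈ Finset.range N, r ^ m * ω (m : ℤ) with hAdef
    have hA0 : 0 ≤ A :=
      Finset.sum_nonneg fun m _ => mul_nonneg (pow_nonneg hr0.le m) (hωpos m)
    have key : ∀ i : ℕ, ∑ k ∈ Finset.range N, r ^ k * ω ((k : ℤ) - (i : ℤ)) ≤ r ^ i * A := by
      intro i
      by_cases hiN : i ≤ N
      · rw [Finset.range_eq_Ico, ← Finset.sum_Ico_consecutive _ (Nat.zero_le i) hiN]
        have hz : ∑ k ∈ Finset.Ico 0 i, r ^ k * ω ((k : ℤ) - (i : ℤ)) = 0 := by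
          apply Finset.sum_eq_zero
          intro k hk
          simp only [Finset.mem_Ico] at hk
          rw [hωneg _ (by omega)]
          ring
        rw [hz, zero_add, Finset.sum_Ico_eq_sum_range]
        have heq : ∀ m ∈ Finset.range (N - i),
            r ^ (i + m) * ω ((↑(i + m) : ℤ) - (i : ℤ)) = r ^ i * (r ^ m * ω (m : ℤ)) := by
          intro m _
          have h5 : ((↑(i + m) : ℤ) - (i : ℤ)) = (m : ℤ) := by push_cast; ring
          rw [h5, pow_add]
          ring
        rw [Finset.sum_congr rfl heq, ← Finset.mul_sum]
        apply mul_le_mul_of_nonneg_left _ (pow_nonneg hr0.le i)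
        apply Finset.sum_le_sum_of_subset_of_nonneg
        · exact Finset.range_subset_range.mpr (Nat.sub_le N i)
        · intro m _ _
          exact mul_nonneg (pow_nonneg hr0.le m) (hωpos m)
      · have hz : ∑ k ∈ Finset.range N, r ^ k * ω ((k : ℤ) - (i : ℤ)) = 0 := by
          apply Finset.sum_eq_zero
          intro k hk
          simp only [Finset.mem_range] at hk
          rw [hωneg _ (by omega)]
          ring
        rw [hz]
        exact mul_nonneg (pow_nonneg hr0.le i) hA0
    have hgeom : c * ∑ i ∈ Finset.range (k₀ + 1), r ^ i ≤ b := by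
      have hr1 : (1 : ℝ) < r := (one_lt_inv₀ ha0).mpr ha1
      have h1a : (0 : ℝ) < 1 - a := by linarith
      have hak : (0 : ℝ) < a ^ k₀ := pow_pos ha0 k₀
      rw [geom_sum_eq (ne_of_gt hr1)]
      have heq : (r ^ (k₀ + 1) - 1) / (r - 1) = (1 - a ^ (k₀ + 1)) / ((1 - a) * a ^ k₀) := by
        rw [hrdef, div_eq_div_iff (by linarith) (by positivity)]
        field_simp
        have hinv : a * a ^ k₀ * a⁻¹ * a⁻¹ ^ k₀ = 1 := by
          rw [inv_pow, mul_assoc (a * a ^ k₀), ← mul_inv, mul_inv_cancel₀ (by positivity)]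
        linear_combination hinv
      rw [heq]
      calc c * ((1 - a ^ (k₀ + 1)) / ((1 - a) * a ^ k₀))
          = c / (1 - a) * ((1 - a ^ (k₀ + 1)) / a ^ k₀) := by
            field_simp
        _ ≤ b := hcond
    calc D N = ∑ k ∈ Finset.range N,
          (c * (∑ i ∈ Finset.range (k₀ + 1), r ^ k * ω ((k : ℤ) - (i : ℤ)))
            - b * (r ^ k * ω (k : ℤ))) := by
          refine Finset.sum_congr rfl fun k _ => ?_
          rw [hS', ← Finset.mul_sum]
          ring
      _ = c * (∑ i ∈ Finset.range (k₀ + 1),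
            ∑ k ∈ Finset.range N, r ^ k * ω ((k : ℤ) - (i : ℤ))) - b * A := by
          rw [Finset.sum_sub_distrib, ← Finset.mul_sum, ← Finset.mul_sum, Finset.sum_comm]
      _ ≤ c * (∑ i ∈ Finset.range (k₀ + 1), r ^ i * A) - b * A := by
          have := Finset.sum_le_sum fun i (_ : i ∈ Finset.range (k₀ + 1)) => key i
          have h6 := mul_le_mul_of_nonneg_left this hc
          linarith
      _ = (c * ∑ i ∈ Finset.range (k₀ + 1), r ^ i) * A - b * A := by
          rw [← Finset.sum_mul]
          ring
      _ ≤ 0 := by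
          have h7 := mul_le_mul_of_nonneg_right hgeom hA0
          linarith
  intro k
  calc V k ≤ a ^ k * (V 0 + D k) := hmain k
    _ ≤ a ^ k * (V 0 + 0) := by
        have := mul_le_mul_of_nonneg_left (add_le_add_left (hDle k) (V 0)) (hpos k).le
        linarith
    _ = a ^ k * V 0 := by ring
end
end

section
/- Let f : ℝ^{d₁} → ℝ and h* : ℝ^{d₂} → (−∞,∞] be proper, closed, convex functions with f finite-valued, let K be a real d₂×d₁ matrix, and define the Lagrangian L(x,y) = f(x) + ⟨Kx, y⟩ − h*(y). For closed sets B₁ ⊂ ℝ^{d₁}, B₂ ⊂ ℝ^{d₂}, define the restricted primal-dual gap G_{B₁×B₂}(x,y) = sup_{y'∈B₂} L(x,y') − inf_{x'∈B₁} L(x',y). If (x,y) is an interior point of B₁ × B₂ and G_{B₁×B₂}(x,y) = 0, then (x,y) is a saddle point of L, i.e. L(x, y') ≤ L(x,y) ≤ L(x', y) for all x' ∈ ℝ^{d₁}, y' ∈ ℝ^{d₂}. -/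
open scoped RealInnerProductSpace
open Filter Topology

noncomputable section

lemma seg_mem_of_interior {E : Type*} [NormedAddCommGroup E] [NormedSpace ℝ E]
    {B : Set E} {y : E} (hy : y ∈ interior B) (y' : E) :
    ∃ t : ℝ, 0 < t ∧ t ≤ 1 ∧ (1 - t) • y + t • y' ∈ B := by
  obtain ⟨ε, hε, hball⟩ := Metric.isOpen_iff.mp isOpen_interior y hy
  set n := ‖y' - y‖ with hn
  have hn0 : 0 ≤ n := norm_nonneg _
  set t := min 1 (ε / (2 * (n + 1))) with ht
  have ht0 : 0 < t := lt_min one_pos (by positivity)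
  refine ⟨t, ht0, min_le_left _ _, ?_⟩
  apply interior_subset (hball ?_)
  rw [Metric.mem_ball, dist_eq_norm]
  have heq : (1 - t) • y + t • y' - y = t • (y' - y) := by module
  rw [heq, norm_smul, Real.norm_eq_abs, abs_of_pos ht0, ← hn]
  have htle : t ≤ ε / (2 * (n + 1)) := min_le_right _ _
  have h2 : ε / (2 * (n + 1)) * n < ε := by
    rw [div_mul_eq_mul_div, div_lt_iff₀ (by positivity)]
    nlinarith
  calc t * n ≤ ε / (2 * (n + 1)) * n := by nlinarith
    _ < ε := h2

/-- If the restricted primal-dual gap vanishes at an interior point of `B₁ × B₂`,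
then that point is a saddle point of the Lagrangian. -/
theorem stmt_1 (d₁ d₂ : ℕ)
    (f : EuclideanSpace ℝ (Fin d₁) → ℝ)
    (hfconv : ConvexOn ℝ Set.univ f) (hflsc : LowerSemicontinuous f)
    (hstar : EuclideanSpace ℝ (Fin d₂) → EReal)
    (hproper : EProper hstar) (hlsc : LowerSemicontinuous hstar) (hconvh : EConvexFn hstar)
    (K : EuclideanSpace ℝ (Fin d₁) →L[ℝ] EuclideanSpace ℝ (Fin d₂))
    (B₁ : Set (EuclideanSpace ℝ (Fin d₁))) (B₂ : Set (EuclideanSpace ℝ (Fin d₂)))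
    (hB₁ : IsClosed B₁) (hB₂ : IsClosed B₂)
    (x : EuclideanSpace ℝ (Fin d₁)) (y : EuclideanSpace ℝ (Fin d₂))
    (hint : (x, y) ∈ interior (B₁ ×ˢ B₂))
    (hgap : (⨆ y' ∈ B₂, Lagr f hstar K x y') - (⨅ x' ∈ B₁, Lagr f hstar K x' y) = 0) :
    IsSaddlePt (Lagr f hstar K) x y := by
  rw [interior_prod_eq] at hint
  obtain ⟨hxint, hyint⟩ := hint
  have hxB : x ∈ B₁ := interior_subset hxint
  have hyB : y ∈ B₂ := interior_subset hyint
  set S := ⨆ y' ∈ B₂, Lagr f hstar K x y' with hSdef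
  set I := ⨅ x' ∈ B₁, Lagr f hstar K x' y with hIdef
  -- L is never ⊤
  have hne_top : ∀ x' y', Lagr f hstar K x' y' ≠ ⊤ := by
    intro x' y'
    rw [Lagr, sub_eq_add_neg]
    apply ne_top_of_lt
    apply EReal.add_lt_top
    · exact ne_top_of_lt (EReal.add_lt_top (EReal.coe_ne_top _) (EReal.coe_ne_top _))
    · simp only [ne_eq, EReal.neg_eq_top_iff]
      exact hproper.2 y'
  have hLS : Lagr f hstar K x y ≤ S := le_iSup₂ (f := fun y' (_ : y' ∈ B₂) => Lagr f hstar K x y') y hyB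
  have hIL : I ≤ Lagr f hstar K x y := iInf₂_le (f := fun x' (_ : x' ∈ B₁) => Lagr f hstar K x' y) x hxB
  have hI_ne_top : I ≠ ⊤ := by
    intro h
    exact hne_top x y (top_le_iff.mp (h ▸ hIL))
  have hS_ne_top : S ≠ ⊤ := by
    intro h
    rw [h, sub_eq_add_neg, EReal.top_add_of_ne_bot (by simpa using hI_ne_top)] at hgap
    exact absurd hgap (by simp)
  have hS_ne_bot : S ≠ ⊥ := by
    intro h
    rw [h, sub_eq_add_neg, EReal.bot_add] at hgap
    exact absurd hgap (by simp)
  obtain ⟨s, hs⟩ : ∃ s : ℝ, S = (s : EReal) := ⟨S.toReal, (EReal.coe_toReal hS_ne_top hS_ne_bot).symm⟩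
  have hI_ne_bot : I ≠ ⊥ := by
    intro h
    rw [hs, h, sub_eq_add_neg, EReal.neg_bot, EReal.add_top_of_ne_bot (EReal.coe_ne_bot _)] at hgap
    exact absurd hgap (by simp)
  obtain ⟨i, hi⟩ : ∃ i : ℝ, I = (i : EReal) := ⟨I.toReal, (EReal.coe_toReal hI_ne_top hI_ne_bot).symm⟩
  have his : i = s := by
    rw [hs, hi, ← EReal.coe_sub] at hgap
    have : s - i = 0 := by exact_mod_cast hgap
    linarith
  -- L(x,y) = s
  have hLxy : Lagr f hstar K x y = (s : EReal) := by
    refine le_antisymm (hs ▸ hLS) ?_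
    rw [← his, ← hi]; exact hIL
  -- hstar y is real
  have hhy_ne_top : hstar y ≠ ⊤ := by
    intro h
    rw [Lagr, h, sub_eq_add_neg, EReal.neg_top, EReal.add_bot] at hLxy
    exact EReal.coe_ne_bot s hLxy.symm
  obtain ⟨hy0, hhy⟩ : ∃ h0 : ℝ, hstar y = (h0 : EReal) :=
    ⟨(hstar y).toReal, (EReal.coe_toReal hhy_ne_top (hproper.2 y)).symm⟩
  -- s = f x + ⟪K x, y⟫ - hy0
  have hLreal : ∀ x', Lagr f hstar K x' y = ((f x' + ⟪K x', y⟫ - hy0 : ℝ) : EReal) := by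
    intro x'
    rw [Lagr, hhy, ← EReal.coe_add, ← EReal.coe_sub]
  have hseq : f x + ⟪K x, y⟫ - hy0 = s := by
    have := hLreal x
    rw [hLxy] at this
    exact_mod_cast this.symm
  intro x' y'
  constructor
  · -- L(x, y') ≤ L(x, y)
    rw [hLxy]
    by_cases hty' : hstar y' = ⊤
    · rw [Lagr, hty', sub_eq_add_neg, EReal.neg_top, EReal.add_bot]
      exact bot_le
    obtain ⟨h', hh'⟩ : ∃ h' : ℝ, hstar y' = (h' : EReal) :=
      ⟨(hstar y').toReal, (EReal.coe_toReal hty' (hproper.2 y')).symm⟩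
    obtain ⟨t, ht0, ht1, htB⟩ := seg_mem_of_interior hyint y'
    set yt := (1 - t) • y + t • y' with hyt
    have hconv := hconvh y y' (1 - t) t (by linarith) (le_of_lt ht0) (by ring)
    rw [hhy, hh', ← EReal.coe_mul, ← EReal.coe_mul, ← EReal.coe_add] at hconv
    have hup : Lagr f hstar K x yt ≤ (s : EReal) := hs ▸ le_iSup₂ (f := fun y' (_ : y' ∈ B₂) => Lagr f hstar K x y') yt htB
    have hlow : ((f x + ⟪K x, yt⟫ - ((1 - t) * hy0 + t * h') : ℝ) : EReal) ≤ Lagr f hstar K x yt := by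
      rw [Lagr, EReal.coe_sub, EReal.coe_add]
      exact EReal.sub_le_sub (le_refl _) hconv
    have hreal : f x + ⟪K x, yt⟫ - ((1 - t) * hy0 + t * h') ≤ s := by
      exact_mod_cast hlow.trans hup
    have hip : ⟪K x, yt⟫ = (1 - t) * ⟪K x, y⟫ + t * ⟪K x, y'⟫ := by
      rw [hyt, inner_add_right, real_inner_smul_right, real_inner_smul_right]
    have : f x + ⟪K x, y'⟫ - h' ≤ s := by nlinarith [hreal, hip, hseq]
    calc Lagr f hstar K x y' = ((f x + ⟪K x, y'⟫ - h' : ℝ) : EReal) := by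
          rw [Lagr, hh', ← EReal.coe_add, ← EReal.coe_sub]
      _ ≤ (s : EReal) := by exact_mod_cast this
  · -- L(x, y) ≤ L(x', y)
    rw [hLxy, hLreal]
    obtain ⟨t, ht0, ht1, htB⟩ := seg_mem_of_interior hxint x'
    set xt := (1 - t) • x + t • x' with hxt
    have hlow : (s : EReal) ≤ Lagr f hstar K xt y := by
      rw [← his, ← hi]; exact iInf₂_le (f := fun x' (_ : x' ∈ B₁) => Lagr f hstar K x' y) xt htB
    rw [hLreal xt] at hlow
    have hreal : s ≤ f xt + ⟪K xt, y⟫ - hy0 := by exact_mod_cast hlow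
    have hfc : f xt ≤ (1 - t) * f x + t * f x' := by
      have := hfconv.2 (Set.mem_univ x) (Set.mem_univ x') (by linarith : (0:ℝ) ≤ 1 - t)
        (le_of_lt ht0) (by ring)
      simpa [smul_eq_mul] using this
    have hip : ⟪K xt, y⟫ = (1 - t) * ⟪K x, y⟫ + t * ⟪K x', y⟫ := by
      rw [hxt, map_add, map_smul, map_smul, inner_add_left, real_inner_smul_left,
        real_inner_smul_left]
    have : s ≤ f x' + ⟪K x', y⟫ - hy0 := by nlinarith [hreal, hip, hfc, hseq]
    exact_mod_cast this
end
end

section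
/- Let f_i : ℝ^{d₁} → ℝ (i = 1,…,N) be convex and L_i-smooth, set f = Σ_{i=1}^N f_i and L = Σ_{i=1}^N L_i. Let {x_j}_{j ≥ −T} be any sequence in ℝ^{d₁}, let k ≥ 0, and for each i let τ_k^i ∈ {0,1,…,T}. Then for every x ∈ ℝ^{d₁}, f(x) ≥ f(x_{k+1}) + ⟨Σ_{i=1}^N ∇f_i(x_{k−τ_k^i}), x − x_{k+1}⟩ − (L(T+1)/2) Σ_{j=k−T}^{k} ‖x_{j+1} − x_j‖². -/
open scoped RealInnerProductSpace
open Filter Topology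

noncomputable section

lemma aux_grad_convex {d : ℕ} {g : EuclideanSpace ℝ (Fin d) → ℝ}
    (hc : ConvexOn ℝ Set.univ g) (hd : Differentiable ℝ g)
    (w z : EuclideanSpace ℝ (Fin d)) :
    g w + ⟪gradient g w, z - w⟫ ≤ g z := by
  set φ : ℝ → ℝ := fun t => g (t • (z - w) + w) with hφ
  have hφc : ConvexOn ℝ Set.univ φ := by
    have h := hc.comp_affineMap (AffineMap.lineMap w z : ℝ →ᵃ[ℝ] _)
    have he : (g ∘ (AffineMap.lineMap w z : ℝ →ᵃ[ℝ] _)) = φ := by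
      funext t
      simp only [Function.comp_apply, AffineMap.lineMap_apply_module, hφ]
      congr 1
      module
    simpa [he] using h
  have hφd : HasDerivAt φ ⟪gradient g w, z - w⟫ 0 := by
    have hcurve : HasDerivAt (fun t : ℝ => t • (z - w) + w) (z - w) 0 := by
      simpa using ((hasDerivAt_id (0:ℝ)).smul_const (z - w)).add_const w
    have h1 : HasFDerivAt g
        ((InnerProductSpace.toDual ℝ _) (gradient g ((0:ℝ) • (z - w) + w)))
        ((0:ℝ) • (z - w) + w) :=
      hasGradientAt_iff_hasFDerivAt.mp (hd _).hasGradientAt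
    have := h1.comp_hasDerivAt 0 hcurve
    simpa [hφ, Function.comp_def] using this
  have hle := hφc.le_slope_of_hasDerivAt (Set.mem_univ (0:ℝ)) (Set.mem_univ (1:ℝ))
    zero_lt_one hφd
  have hslope : slope φ 0 1 = g z - g w := by
    simp [slope_def_field, hφ]
  rw [hslope] at hle
  linarith

lemma aux_L_nonneg {d : ℕ} {g : EuclideanSpace ℝ (Fin d) → ℝ} {L : ℝ}
    (hs : LSmooth g L) (hd : 0 < d) : 0 ≤ L := by
  obtain ⟨-, h⟩ := hs
  have h1 := h 0 (EuclideanSpace.single ⟨0, hd⟩ (1:ℝ))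
  have hn : ‖(EuclideanSpace.single ⟨0, hd⟩ (1:ℝ) : EuclideanSpace ℝ (Fin d)) - 0‖ ^ 2 = 1 := by
    simp [EuclideanSpace.norm_single]
  rw [hn, mul_one] at h1
  have := (abs_nonneg _).trans h1
  linarith

lemma aux_tele {d : ℕ} (x : ℤ → EuclideanSpace ℝ (Fin d)) (k : ℤ) (τ T : ℕ) (hτ : τ ≤ T) :
    ‖x (k + 1) - x (k - (τ:ℤ))‖ ^ 2
      ≤ ((T:ℝ) + 1) * ∑ j ∈ Finset.Icc (k - (T:ℤ)) k, ‖x (j + 1) - x j‖ ^ 2 := by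
  have e1 : ∀ j : ℕ, k - (τ:ℤ) + ((j:ℤ) + 1) = k - (τ:ℤ) + (j:ℤ) + 1 := fun j => by ring
  have htel : ∑ j ∈ Finset.range (τ+1),
      (x (k - (τ:ℤ) + (j:ℤ) + 1) - x (k - (τ:ℤ) + (j:ℤ))) = x (k+1) - x (k - (τ:ℤ)) := by
    have h := Finset.sum_range_sub (fun j : ℕ => x (k - (τ:ℤ) + (j:ℤ))) (τ+1)
    push_cast at h
    simp only [e1] at h
    rw [show k - (τ:ℤ) + (τ:ℤ) + 1 = k + 1 from by ring, add_zero] at h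
    exact h
  have h2 : ‖x (k+1) - x (k - (τ:ℤ))‖ ^ 2
      ≤ ((τ:ℝ)+1) * ∑ j ∈ Finset.range (τ+1),
        ‖x (k - (τ:ℤ) + (j:ℤ) + 1) - x (k - (τ:ℤ) + (j:ℤ))‖ ^ 2 := by
    rw [← htel]
    calc ‖∑ j ∈ Finset.range (τ+1), (x (k - (τ:ℤ) + (j:ℤ) + 1) - x (k - (τ:ℤ) + (j:ℤ)))‖ ^ 2
        ≤ (∑ j ∈ Finset.range (τ+1), ‖x (k - (τ:ℤ) + (j:ℤ) + 1) - x (k - (τ:ℤ) + (j:ℤ))‖) ^ 2 :=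
          pow_le_pow_left₀ (norm_nonneg _) (norm_sum_le _ _) 2
      _ ≤ ((τ:ℝ)+1) * ∑ j ∈ Finset.range (τ+1),
            ‖x (k - (τ:ℤ) + (j:ℤ) + 1) - x (k - (τ:ℤ) + (j:ℤ))‖ ^ 2 := by
          have := sq_sum_le_card_mul_sum_sq (s := Finset.range (τ+1))
            (f := fun j : ℕ => ‖x (k - (τ:ℤ) + (j:ℤ) + 1) - x (k - (τ:ℤ) + (j:ℤ))‖)
          simpa using this
  have h3 : ∑ j ∈ Finset.range (τ+1),
      ‖x (k - (τ:ℤ) + (j:ℤ) + 1) - x (k - (τ:ℤ) + (j:ℤ))‖ ^ 2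
      ≤ ∑ j ∈ Finset.Icc (k - (T:ℤ)) k, ‖x (j + 1) - x j‖ ^ 2 := by
    have hinj : ∀ a ∈ Finset.range (τ+1), ∀ b ∈ Finset.range (τ+1),
        (fun j : ℕ => k - (τ:ℤ) + (j:ℤ)) a = (fun j : ℕ => k - (τ:ℤ) + (j:ℤ)) b → a = b := by
      intro a _ b _ hab; simp only at hab; omega
    rw [show ∑ j ∈ Finset.range (τ+1),
        ‖x (k - (τ:ℤ) + (j:ℤ) + 1) - x (k - (τ:ℤ) + (j:ℤ))‖ ^ 2
        = ∑ j ∈ (Finset.range (τ+1)).image (fun j : ℕ => k - (τ:ℤ) + (j:ℤ)),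
          ‖x (j + 1) - x j‖ ^ 2 from (Finset.sum_image
            (f := fun j : ℤ => ‖x (j + 1) - x j‖ ^ 2) hinj).symm]
    apply Finset.sum_le_sum_of_subset_of_nonneg
    · intro j hj
      simp only [Finset.mem_image, Finset.mem_range] at hj
      obtain ⟨a, ha, rfl⟩ := hj
      simp only [Finset.mem_Icc]
      omega
    · intros; positivity
  have hτ' : ((τ:ℝ)+1) ≤ ((T:ℝ)+1) := by exact_mod_cast by omega
  have hnn : (0:ℝ) ≤ ∑ j ∈ Finset.range (τ+1),
      ‖x (k - (τ:ℤ) + (j:ℤ) + 1) - x (k - (τ:ℤ) + (j:ℤ))‖ ^ 2 := by positivity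
  nlinarith [h2, h3, hnn, mul_le_mul_of_nonneg_left h3 (by positivity : (0:ℝ) ≤ (τ:ℝ)+1)]

/-- Delayed descent inequality for a sum of convex smooth components. -/
theorem stmt_2 (d₁ N T : ℕ)
    (f : Fin N → EuclideanSpace ℝ (Fin d₁) → ℝ) (Lc : Fin N → ℝ)
    (hconv : ∀ i, ConvexOn ℝ Set.univ (f i))
    (hsmooth : ∀ i, LSmooth (f i) (Lc i))
    (x : ℤ → EuclideanSpace ℝ (Fin d₁)) (k : ℤ) (hk : 0 ≤ k)
    (τk : Fin N → ℕ) (hτk : ∀ i, τk i ≤ T) :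
    ∀ z : EuclideanSpace ℝ (Fin d₁),
      (∑ i, f i z) ≥ (∑ i, f i (x (k + 1)))
        + ⟪∑ i, gradient (f i) (x (k - (τk i : ℤ))), z - x (k + 1)⟫
        - (∑ i, Lc i) * ((T : ℝ) + 1) / 2 * ∑ j ∈ Finset.Icc (k - (T : ℤ)) k, ‖x (j + 1) - x j‖ ^ 2 := by
  intro z
  rcases Nat.eq_zero_or_pos d₁ with hd | hd
  · subst hd
    have h0 : ∀ a : EuclideanSpace ℝ (Fin 0), a = 0 := fun a => Subsingleton.elim a 0
    have hf : ∀ i (a b : EuclideanSpace ℝ (Fin 0)), f i a = f i b := by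
      intro i a b; rw [Subsingleton.elim a b]
    have hzz : z - x (k+1) = 0 := by rw [Subsingleton.elim z (x (k+1))]; simp
    have hns : ∀ j : ℤ, ‖x (j+1) - x j‖ ^ 2 = 0 := by
      intro j; rw [Subsingleton.elim (x (j+1)) (x j)]; simp
    simp only [hzz, inner_zero_right, hns, Finset.sum_const, smul_zero, mul_zero,
      add_zero, sub_zero, ge_iff_le]
    exact le_of_eq (Finset.sum_congr rfl fun i _ => hf i (x (k+1)) z)
  · set S : ℝ := ∑ j ∈ Finset.Icc (k - (T:ℤ)) k, ‖x (j + 1) - x j‖ ^ 2 with hS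
    set w : Fin N → EuclideanSpace ℝ (Fin d₁) := fun i => x (k - (τk i : ℤ)) with hw
    have hL : ∀ i, 0 ≤ Lc i := fun i => aux_L_nonneg (hsmooth i) hd
    have key : ∀ i, f i (x (k+1)) + ⟪gradient (f i) (w i), z - x (k+1)⟫
        - Lc i / 2 * (((T:ℝ)+1) * S) ≤ f i z := by
      intro i
      have h1 := aux_grad_convex (hconv i) (hsmooth i).1 (w i) z
      have h2 := (abs_le.mp ((hsmooth i).2 (w i) (x (k+1)))).2
      have h3 : (z - w i) = (z - x (k+1)) + (x (k+1) - w i) := by abel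
      rw [h3, inner_add_right] at h1
      have h4 : ‖x (k+1) - w i‖ ^ 2 ≤ ((T:ℝ)+1) * S := aux_tele x k (τk i) T (hτk i)
      nlinarith [hL i, mul_le_mul_of_nonneg_left h4 (by linarith [hL i] : (0:ℝ) ≤ Lc i / 2)]
    have hsum := Finset.sum_le_sum (fun i (_ : i ∈ Finset.univ) => key i)
    rw [ge_iff_le]
    have hsplit : ∑ i, (f i (x (k+1)) + ⟪gradient (f i) (w i), z - x (k+1)⟫
        - Lc i / 2 * (((T:ℝ)+1) * S))
        = (∑ i, f i (x (k+1))) + ⟪∑ i, gradient (f i) (w i), z - x (k+1)⟫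
          - (∑ i, Lc i) * ((T:ℝ)+1) / 2 * S := by
      rw [Finset.sum_sub_distrib, Finset.sum_add_distrib, sum_inner, ← Finset.sum_mul,
        ← Finset.sum_div]
      ring
    rw [hsplit] at hsum
    exact hsum
end
end

section
/- Let f_i : ℝ^{d₁} → ℝ (i = 1,…,N) be convex and L_i-smooth with f = Σ f_i, L = Σ L_i; let h* : ℝ^{d₂} → (−∞,∞] be proper, closed, convex; let K be a d₂×d₁ real matrix and L(x,y) = f(x) + ⟨Kx,y⟩ − h*(y). Let σ, τ > 0 and let {(x_k, y_k)} be generated by the extrapolated PD-PIAG iteration: g_k = Σ_i ∇f_i(x_{k−τ_k^i}) with delays τ_k^i ∈ {0,…,T}, x_{k+1} = x_k − σ g_k − σ Kᵀ(2y_k − y_{k−1}), y_{k+1} = Prox_{τ h*}(y_k + τ K x_{k+1}). Then for every k ≥ 0 and every (x,y) ∈ ℝ^{d₁}×ℝ^{d₂}: ‖x − x_k‖²/(2σ) + ‖y − y_k‖²/(2τ) ≥ L(x_{k+1}, y) − L(x, y_{k+1}) + ‖x − x_{k+1}‖²/(2σ) + ‖y − y_{k+1}‖²/(2τ) + (1 −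 √(τσ)‖K‖) ‖x_k − x_{k+1}‖²/(2σ) + ‖y_k − y_{k+1}‖²/(2τ) − √(τσ)‖K‖ ‖y_{k−1} − y_k‖²/(2τ) − ⟨Kᵀ(y_{k+1} − y_k), x_{k+1} − x⟩ + ⟨Kᵀ(y_k − y_{k−1}), x_k − x⟩ − (L(T+1)/2) Σ_{j=k−T}^{k} ‖x_{j+1} − x_j‖². -/
open scoped RealInnerProductSpace
open Filter Topology

noncomputable section

private lemma icc_succ (a b : ℤ) (h : a ≤ b + 1) :
    Finset.Icc a (b + 1) = insert (b + 1) (Finset.Icc a b) := by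
  ext t; simp only [Finset.mem_Icc, Finset.mem_insert]; omega

private lemma tele_sum {E : Type*} [AddCommGroup E] (v : ℤ → E) (a b : ℤ) (h : a ≤ b + 1) :
    ∑ j ∈ Finset.Icc a b, (v (j + 1) - v j) = v (b + 1) - v a := by
  have h' : a - 1 ≤ b := by omega
  clear h
  refine Int.le_induction (motive := fun c _ => ∑ j ∈ Finset.Icc a c, (v (j + 1) - v j) = v (c + 1) - v a) ?_ ?_ b h'
  · show _ = _
    rw [Finset.Icc_eq_empty (by omega), Finset.sum_empty,
      show a - 1 + 1 = a from by ring, sub_self]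
  · intro n hn ih
    show _ = _
    rw [icc_succ a n (by omega), Finset.sum_insert (by simp [Finset.mem_Icc]), ih]
    abel

private lemma tele_norm_sq {E : Type*} [NormedAddCommGroup E] [InnerProductSpace ℝ E]
    (v : ℤ → E) (a b : ℤ) (h : a ≤ b + 1) :
    ‖v (b + 1) - v a‖ ^ 2 ≤ ((b + 1 - a : ℤ) : ℝ) * ∑ j ∈ Finset.Icc a b, ‖v (j + 1) - v j‖ ^ 2 := by
  rw [← tele_sum v a b h]
  calc ‖∑ j ∈ Finset.Icc a b, (v (j + 1) - v j)‖ ^ 2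
      ≤ (∑ j ∈ Finset.Icc a b, ‖v (j + 1) - v j‖) ^ 2 := by
        apply pow_le_pow_left₀ (norm_nonneg _) (norm_sum_le _ _)
    _ ≤ (Finset.Icc a b).card * ∑ j ∈ Finset.Icc a b, ‖v (j + 1) - v j‖ ^ 2 :=
        sq_sum_le_card_mul_sum_sq
    _ = ((b + 1 - a : ℤ) : ℝ) * ∑ j ∈ Finset.Icc a b, ‖v (j + 1) - v j‖ ^ 2 := by
        rw [Int.card_Icc]
        congr 1
        have h0 : (0:ℤ) ≤ b + 1 - a := by omega
        exact_mod_cast congrArg (Int.cast : ℤ → ℝ) (Int.toNat_of_nonneg h0)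

private lemma lsmooth_descent {d : ℕ} {g : EuclideanSpace ℝ (Fin d) → ℝ} {L : ℝ}
    (hs : LSmooth g L) (x u : EuclideanSpace ℝ (Fin d)) :
    g u ≤ g x + ⟪gradient g x, u - x⟫ + L / 2 * ‖u - x‖ ^ 2 := by
  have := abs_le.1 (hs.2 x u)
  linarith [this.2]

private lemma grad_convex_ineq {d : ℕ} {g : EuclideanSpace ℝ (Fin d) → ℝ} {L : ℝ}
    (hc : ConvexOn ℝ Set.univ g) (hs : LSmooth g L) (x u : EuclideanSpace ℝ (Fin d)) :
    g x + ⟪gradient g x, u - x⟫ ≤ g u := by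
  set c := L / 2 * ‖u - x‖ ^ 2 with hc_def
  have key : ∀ t : ℝ, 0 < t → t ≤ 1 → ⟪gradient g x, u - x⟫ - (g u - g x) ≤ t * c := by
    intro t ht ht1
    set w := x + t • (u - x) with hw
    have hwx : w - x = t • (u - x) := by rw [hw]; abel
    have hsm := abs_le.1 (hs.2 x w)
    have hinner : ⟪gradient g x, w - x⟫ = t * ⟪gradient g x, u - x⟫ := by
      rw [hwx, real_inner_smul_right]
    have hnorm : ‖w - x‖ ^ 2 = t ^ 2 * ‖u - x‖ ^ 2 := by
      rw [hwx, norm_smul, mul_pow, Real.norm_eq_abs, sq_abs]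
    have hcw : g w ≤ t * g u + (1 - t) * g x := by
      have h2 := hc.2 (Set.mem_univ u) (Set.mem_univ x) ht.le (by linarith : (0:ℝ) ≤ 1 - t)
        (by ring)
      have heq : t • u + (1 - t) • x = w := by rw [hw]; module
      rw [heq] at h2
      simp only [smul_eq_mul] at h2
      linarith [h2]
    have h1 := hsm.1
    rw [hinner, hnorm] at h1
    rw [hc_def]
    nlinarith
  rcases le_or_gt c 0 with h | h
  · have := key 1 one_pos le_rfl; linarith
  · have hfin : ⟪gradient g x, u - x⟫ - (g u - g x) ≤ 0 := by
      refine le_of_forall_pos_le_add ?_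
      intro ε hε
      have htpos : 0 < min (ε / c) 1 := lt_min (div_pos hε h) one_pos
      have hk := key _ htpos (min_le_right _ _)
      have h2 : min (ε / c) 1 * c ≤ ε := by
        calc min (ε / c) 1 * c ≤ ε / c * c :=
              mul_le_mul_of_nonneg_right (min_le_left _ _) h.le
          _ = ε := by field_simp
      linarith
    linarith

private lemma amgm_cross (c a b p q : ℝ) (hc : 0 ≤ c) (hp : 0 < p) (hq : 0 < q) :
    c * b * a ≤ p * q * c * (a ^ 2 / (2 * q ^ 2)) + p * q * c * (b ^ 2 / (2 * p ^ 2)) := by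
  rw [← sub_nonneg]
  have key : p * q * c * (a ^ 2 / (2 * q ^ 2)) + p * q * c * (b ^ 2 / (2 * p ^ 2))
      - c * b * a = c * (p * a - q * b) ^ 2 / (2 * p * q) := by
    field_simp
    ring
  rw [key]
  positivity

private lemma combo_norm_sq {d : ℕ} (p u z : EuclideanSpace ℝ (Fin d)) (t : ℝ) :
    ‖((1 - t) • p + t • u) - z‖ ^ 2
      = (1 - t) * ‖p - z‖ ^ 2 + t * ‖u - z‖ ^ 2 - t * (1 - t) * ‖u - p‖ ^ 2 := by
  have hv : ((1 - t) • p + t • u) - z = (p - z) + t • (u - p) := by module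
  have hdecomp : u - z = (p - z) + (u - p) := by abel
  have h1 : ‖(p - z) + t • (u - p)‖ ^ 2
      = ‖p - z‖ ^ 2 + 2 * (t * ⟪p - z, u - p⟫) + t ^ 2 * ‖u - p‖ ^ 2 := by
    rw [norm_add_sq_real, real_inner_smul_right, norm_smul, mul_pow, Real.norm_eq_abs, sq_abs]
  have h2 : ‖u - z‖ ^ 2 = ‖p - z‖ ^ 2 + 2 * ⟪p - z, u - p⟫ + ‖u - p‖ ^ 2 := by
    rw [hdecomp, norm_add_sq_real]
  rw [hv, h1, h2]
  ring

private lemma expand_prox_sq {d : ℕ} (w Y0 v : EuclideanSpace ℝ (Fin d)) (τ : ℝ) :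
    ‖w - (Y0 + τ • v)‖ ^ 2 = ‖w - Y0‖ ^ 2 - 2 * (τ * ⟪v, w - Y0⟫) + τ ^ 2 * ‖v‖ ^ 2 := by
  have hv : w - (Y0 + τ • v) = (w - Y0) - τ • v := by abel
  rw [hv, norm_sub_sq_real, real_inner_smul_right, norm_smul, mul_pow, Real.norm_eq_abs, sq_abs,
    real_inner_comm]

private lemma pol_ineq {d : ℕ} (a b c : EuclideanSpace ℝ (Fin d)) :
    2 * ⟪a - b, b - c⟫ = ‖a - c‖ ^ 2 - ‖a - b‖ ^ 2 - ‖b - c‖ ^ 2 := by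
  have hd : a - c = (a - b) + (b - c) := by abel
  have := norm_add_sq_real (a - b) (b - c)
  rw [← hd] at this
  linarith

private lemma ereal_ne_top_ne_bot {x : EReal} (ht : x ≠ ⊤) (hb : x ≠ ⊥) : ∃ r : ℝ, x = (r : EReal) :=
  ⟨x.toReal, (EReal.coe_toReal ht hb).symm⟩

private lemma prox_key {d : ℕ} {hstar : EuclideanSpace ℝ (Fin d) → EReal}
    (hproper : EProper hstar) (hconvh : EConvexFn hstar) {τ : ℝ} (hτ : 0 < τ)
    {z p : EuclideanSpace ℝ (Fin d)}
    (hp : IsProxPt (fun u => (τ : EReal) * hstar u) z p) :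
    ∃ H : ℝ, hstar p = (H : EReal) ∧
      ∀ (u : EuclideanSpace ℝ (Fin d)) (Hu : ℝ), hstar u = (Hu : EReal) →
        τ * H + ‖p - z‖ ^ 2 / 2 + ‖u - p‖ ^ 2 / 2 ≤ τ * Hu + ‖u - z‖ ^ 2 / 2 := by
  obtain ⟨z0, hz0⟩ := hproper.1
  obtain ⟨R0, hR0⟩ := ereal_ne_top_ne_bot hz0 (hproper.2 z0)
  have hptop : hstar p ≠ ⊤ := by
    intro h
    have hpz := hp z0
    simp only [h, hR0] at hpz
    rw [EReal.coe_mul_top_of_pos hτ, EReal.top_add_coe, ← EReal.coe_mul, ← EReal.coe_add] at hpz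
    exact (EReal.coe_lt_top _).not_ge hpz
  obtain ⟨H, hH⟩ := ereal_ne_top_ne_bot hptop (hproper.2 p)
  refine ⟨H, hH, ?_⟩
  intro u Hu hu
  set P := ‖p - z‖ ^ 2 with hP
  set U := ‖u - z‖ ^ 2 with hU
  set B := ‖u - p‖ ^ 2 with hB
  have hBnn : 0 ≤ B := by rw [hB]; positivity
  have keyt : ∀ t : ℝ, 0 < t → t < 1 →
      τ * H + P / 2 + (1 - t) * B / 2 ≤ τ * Hu + U / 2 := by
    intro t ht ht1
    set w := (1 - t) • p + t • u with hw
    have hcw : hstar w ≤ (((1 - t) * H + t * Hu : ℝ) : EReal) := by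
      have h2 := hconvh p u (1 - t) t (by linarith) ht.le (by ring)
      rw [hH, hu, ← EReal.coe_mul, ← EReal.coe_mul, ← EReal.coe_add] at h2
      exact h2
    have hwt : hstar w ≠ ⊤ := by
      intro h; rw [h] at hcw; exact (EReal.coe_lt_top _).not_ge hcw
    obtain ⟨Hw, hHw⟩ := ereal_ne_top_ne_bot hwt (hproper.2 w)
    have hHwle : Hw ≤ (1 - t) * H + t * Hu := by
      rw [hHw] at hcw; exact EReal.coe_le_coe_iff.1 hcw
    have hpw := hp w
    simp only [hH, hHw, ← EReal.coe_mul, ← EReal.coe_add] at hpw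
    have hpw' : τ * H + P / 2 ≤ τ * Hw + ‖w - z‖ ^ 2 / 2 := EReal.coe_le_coe_iff.1 hpw
    have hcombo : ‖w - z‖ ^ 2 = (1 - t) * P + t * U - t * (1 - t) * B := by
      rw [hw, hP, hU, hB]; exact combo_norm_sq p u z t
    rw [hcombo] at hpw'
    have hHw2 : τ * Hw ≤ τ * ((1 - t) * H + t * Hu) :=
      mul_le_mul_of_nonneg_left hHwle hτ.le
    have h5 : (τ * H + P / 2 + (1 - t) * B / 2) * t ≤ (τ * Hu + U / 2) * t := by
      nlinarith [hpw', hHw2]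
    exact le_of_mul_le_mul_right h5 ht
  refine le_of_forall_pos_le_add ?_
  intro ε hε
  set t := min (ε / (B + 1)) (1 / 2) with htdef
  have ht : 0 < t := lt_min (div_pos hε (by linarith)) (by norm_num)
  have ht1 : t < 1 := lt_of_le_of_lt (min_le_right _ _) (by norm_num)
  have hk := keyt t ht ht1
  have htB : t * (B + 1) ≤ ε :=
    (le_div_iff₀ (by linarith)).1 (min_le_left _ _)
  nlinarith [hk, ht.le, hBnn]
set_option maxHeartbeats 2000000 in
/-- One-step estimate for the extrapolated PD-PIAG iteration
(`ȳ = 2 y_k - y_(k-1)`), inequality (20) in the paper. -/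
theorem stmt_4
    (d₁ d₂ N T : ℕ)
    (f : Fin N → EuclideanSpace ℝ (Fin d₁) → ℝ) (Lc : Fin N → ℝ)
    (hconv : ∀ i, ConvexOn ℝ Set.univ (f i))
    (hsmooth : ∀ i, LSmooth (f i) (Lc i))
    (hstar : EuclideanSpace ℝ (Fin d₂) → EReal)
    (hproper : EProper hstar) (hlsc : LowerSemicontinuous hstar) (hconvh : EConvexFn hstar)
    (K : EuclideanSpace ℝ (Fin d₁) →L[ℝ] EuclideanSpace ℝ (Fin d₂))
    (σ τ : ℝ) (hσ : 0 < σ) (hτ : 0 < τ)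
    (x : ℤ → EuclideanSpace ℝ (Fin d₁)) (y : ℤ → EuclideanSpace ℝ (Fin d₂))
    (hx0 : ∀ k : ℤ, k ≤ 0 → x k = x 0) (hy0 : ∀ k : ℤ, k ≤ 0 → y k = y 0)
    (dly : ℤ → Fin N → ℕ) (hdly : ∀ (k : ℤ) (i : Fin N), dly k i ≤ T)
    (hxiter : ∀ k : ℤ, 0 ≤ k →
      x (k + 1) = x k - σ • (∑ i, gradient (f i) (x (k - (dly k i : ℤ))))
        - σ • (ContinuousLinearMap.adjoint K) ((2 : ℝ) • y k - y (k - 1)))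
    (hyiter : ∀ k : ℤ, 0 ≤ k →
      IsProxPt (fun u => (τ : EReal) * hstar u) (y k + τ • K (x (k + 1))) (y (k + 1)))
 :
    ∀ k : ℤ, 0 ≤ k → ∀ (xp : EuclideanSpace ℝ (Fin d₁)) (yp : EuclideanSpace ℝ (Fin d₂)),
      Lagr (fun z => ∑ i, f i z) hstar K (x (k + 1)) yp - Lagr (fun z => ∑ i, f i z) hstar K xp (y (k + 1))
        + ((‖xp - x (k + 1)‖ ^ 2 / (2 * σ) + ‖yp - y (k + 1)‖ ^ 2 / (2 * τ)
            + (1 - Real.sqrt (τ * σ) * ‖K‖) * (‖x k - x (k + 1)‖ ^ 2 / (2 * σ))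
            + ‖y k - y (k + 1)‖ ^ 2 / (2 * τ)
            - Real.sqrt (τ * σ) * ‖K‖ * (‖y (k - 1) - y k‖ ^ 2 / (2 * τ))
            - ⟪(ContinuousLinearMap.adjoint K) (y (k + 1) - y k), x (k + 1) - xp⟫
            + ⟪(ContinuousLinearMap.adjoint K) (y k - y (k - 1)), x k - xp⟫
            - (∑ i, Lc i) * ((T : ℝ) + 1) / 2
              * ∑ j ∈ Finset.Icc (k - (T : ℤ)) k, ‖x (j + 1) - x j‖ ^ 2 : ℝ) : EReal)
        ≤ ((‖xp - x k‖ ^ 2 / (2 * σ) + ‖yp - y k‖ ^ 2 / (2 * τ) : ℝ) : EReal) := by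
  intro k hk xp yp
  obtain ⟨H, hH, hkey⟩ := prox_key hproper hconvh hτ (hyiter k hk)
  by_cases hyp : hstar yp = ⊤
  · have h1 : Lagr (fun z => ∑ i, f i z) hstar K (x (k + 1)) yp = ⊥ := by
      simp only [Lagr, hyp, EReal.sub_top]
    rw [h1, EReal.bot_sub, EReal.bot_add]
    exact bot_le
  obtain ⟨Hp, hHp⟩ := ereal_ne_top_ne_bot hyp (hproper.2 yp)
  set X1 := x (k + 1) with hX1
  set X0 := x k with hX0
  set Y1 := y (k + 1) with hY1
  set Y0 := y k with hY0
  set Ym := y (k - 1) with hYm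
  set Kt := ContinuousLinearMap.adjoint K with hKt
  have hL1 : Lagr (fun z => ∑ i, f i z) hstar K X1 yp
      = (((∑ i, f i X1) + ⟪K X1, yp⟫ - Hp : ℝ) : EReal) := by
    simp only [Lagr, hHp, ← EReal.coe_add, ← EReal.coe_sub]
  have hL2 : Lagr (fun z => ∑ i, f i z) hstar K xp Y1
      = (((∑ i, f i xp) + ⟪K xp, Y1⟫ - H : ℝ) : EReal) := by
    simp only [Lagr, hH, ← EReal.coe_add, ← EReal.coe_sub]
  rw [hL1, hL2, ← EReal.coe_sub, ← EReal.coe_add, EReal.coe_le_coe_iff]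
  -- now a real inequality
  set S := ∑ j ∈ Finset.Icc (k - (T : ℤ)) k, ‖x (j + 1) - x j‖ ^ 2 with hS
  have hSnn : 0 ≤ S := Finset.sum_nonneg (fun j _ => by positivity)
  -- per-summand estimate
  have hper : ∀ i, f i X1 - f i xp
      ≤ ⟪gradient (f i) (x (k - (dly k i : ℤ))), X1 - xp⟫
        + Lc i / 2 * (((T : ℝ) + 1) * S) := by
    intro i
    set j : ℤ := k - (dly k i : ℤ) with hj
    have hdesc := lsmooth_descent (hsmooth i) (x j) X1
    have hcvx := grad_convex_ineq (hconv i) (hsmooth i) (x j) xp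
    have hinner : ⟪gradient (f i) (x j), X1 - x j⟫ - ⟪gradient (f i) (x j), xp - x j⟫
        = ⟪gradient (f i) (x j), X1 - xp⟫ := by
      rw [← inner_sub_right]; congr 1; abel
    have hnormb : Lc i / 2 * ‖X1 - x j‖ ^ 2 ≤ Lc i / 2 * (((T : ℝ) + 1) * S) := by
      rcases subsingleton_or_nontrivial (EuclideanSpace ℝ (Fin d₁)) with hss | hnt
      · have h1 : X1 - x j = 0 := Subsingleton.elim _ _
        have h2 : S = 0 := Finset.sum_eq_zero (fun j' _ => by
          rw [Subsingleton.elim (x (j' + 1)) (x j'), sub_self, norm_zero]; ring)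
        rw [h1, h2]; simp
      · have hLnn : 0 ≤ Lc i := by
          obtain ⟨a, b, hab⟩ := exists_pair_ne (EuclideanSpace ℝ (Fin d₁))
          have h1 := (hsmooth i).2 a b
          have h2 : 0 < ‖b - a‖ := by rwa [norm_pos_iff, sub_ne_zero, ne_comm]
          nlinarith [abs_nonneg (f i b - f i a - ⟪gradient (f i) a, b - a⟫), pow_pos h2 2]
        apply mul_le_mul_of_nonneg_left _ (by linarith : (0:ℝ) ≤ Lc i / 2)
        have htel := tele_norm_sq x j k (by omega : j ≤ k + 1)
        have hsub : ∑ jj ∈ Finset.Icc j k, ‖x (jj + 1) - x jj‖ ^ 2 ≤ S := by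
          apply Finset.sum_le_sum_of_subset_of_nonneg
          · apply Finset.Icc_subset_Icc_left
            have := hdly k i; omega
          · intros; positivity
        calc ‖X1 - x j‖ ^ 2
            ≤ ((k + 1 - j : ℤ) : ℝ) * ∑ jj ∈ Finset.Icc j k, ‖x (jj + 1) - x jj‖ ^ 2 := htel
          _ ≤ ((T : ℝ) + 1) * S := by
              apply mul_le_mul _ hsub (Finset.sum_nonneg (fun j' _ => by positivity))
                (by positivity)
              have h3 : (k + 1 - j : ℤ) = (dly k i : ℤ) + 1 := by rw [hj]; ring
              rw [h3]
              have h4 := hdly k i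
              push_cast
              exact add_le_add_left (Nat.cast_le.2 h4) 1
    linarith
  -- sum over i
  set G := ∑ i, gradient (f i) (x (k - (dly k i : ℤ))) with hG
  have hsum : (∑ i, f i X1) - (∑ i, f i xp)
      ≤ ⟪G, X1 - xp⟫ + (∑ i, Lc i) * ((T : ℝ) + 1) / 2 * S := by
    have h1 := Finset.sum_le_sum (fun i (_ : i ∈ Finset.univ) => hper i)
    rw [Finset.sum_add_distrib, Finset.sum_sub_distrib] at h1
    have h2 : ∑ i, ⟪gradient (f i) (x (k - (dly k i : ℤ))), X1 - xp⟫ = ⟪G, X1 - xp⟫ :=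
      (sum_inner _ _ _).symm
    have h3 : ∑ i : Fin N, Lc i / 2 * (((T : ℝ) + 1) * S)
        = (∑ i, Lc i) * ((T : ℝ) + 1) / 2 * S := by
      rw [← Finset.sum_mul]
      rw [← Finset.sum_div]
      ring
    rw [h2, h3] at h1
    exact h1
  -- x update
  set W := Kt ((2 : ℝ) • Y0 - Ym) with hW
  have hxit := hxiter k hk
  have hGeq : G = σ⁻¹ • (X0 - X1) - W := by
    have h1 : σ • G = X0 - X1 - σ • W := by
      rw [hG, hW, hX0, hX1, hY0, hYm, hxit]; abel
    calc G = σ⁻¹ • (σ • G) := by rw [smul_smul, inv_mul_cancel₀ hσ.ne', one_smul]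
      _ = σ⁻¹ • (X0 - X1 - σ • W) := by rw [h1]
      _ = σ⁻¹ • (X0 - X1) - W := by
          rw [smul_sub, smul_smul, inv_mul_cancel₀ hσ.ne', one_smul]
  have hGinner : ⟪G, X1 - xp⟫ = σ⁻¹ * ⟪X0 - X1, X1 - xp⟫ - ⟪W, X1 - xp⟫ := by
    rw [hGeq, inner_sub_left, real_inner_smul_left]
  have hpol := pol_ineq X0 X1 xp
  have hpol2 : ‖xp - X0‖ ^ 2 - ‖X0 - X1‖ ^ 2 - ‖xp - X1‖ ^ 2 = 2 * ⟪X0 - X1, X1 - xp⟫ := by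
    rw [norm_sub_rev xp X0, norm_sub_rev xp X1]
    linarith [hpol]
  have hdiv : σ⁻¹ * ⟪X0 - X1, X1 - xp⟫
      = (‖xp - X0‖ ^ 2 - ‖X0 - X1‖ ^ 2 - ‖xp - X1‖ ^ 2) / (2 * σ) := by
    rw [hpol2, mul_div_mul_left _ _ (two_ne_zero), div_eq_inv_mul]
  have hI : (∑ i, f i X1) - (∑ i, f i xp)
      ≤ (‖xp - X0‖ ^ 2 - ‖X0 - X1‖ ^ 2 - ‖xp - X1‖ ^ 2) / (2 * σ) - ⟪W, X1 - xp⟫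
        + (∑ i, Lc i) * ((T : ℝ) + 1) / 2 * S := by
    rw [← hdiv]; linarith [hsum, hGinner]
  -- y update
  have hkey' := hkey yp Hp hHp
  rw [expand_prox_sq Y1 Y0 (K X1) τ, expand_prox_sq yp Y0 (K X1) τ] at hkey'
  have hiy : ⟪K X1, Y1 - Y0⟫ - ⟪K X1, yp - Y0⟫ = ⟪K X1, Y1 - yp⟫ := by
    rw [← inner_sub_right]; congr 1; abel
  have hiyτ : τ * ⟪K X1, Y1 - Y0⟫ - τ * ⟪K X1, yp - Y0⟫ = τ * ⟪K X1, Y1 - yp⟫ := by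
    rw [← mul_sub, hiy]
  have hIIτ : τ * (H - Hp) ≤ τ * ⟪K X1, Y1 - yp⟫
      + (‖yp - Y0‖ ^ 2 - ‖yp - Y1‖ ^ 2 - ‖Y1 - Y0‖ ^ 2) / 2 := by
    linarith [hkey', hiyτ]
  have hII : H - Hp ≤ ⟪K X1, Y1 - yp⟫
      + (‖yp - Y0‖ ^ 2 - ‖yp - Y1‖ ^ 2 - ‖Y1 - Y0‖ ^ 2) / (2 * τ) := by
    have h7 : τ * (⟪K X1, Y1 - yp⟫
        + (‖yp - Y0‖ ^ 2 - ‖yp - Y1‖ ^ 2 - ‖Y1 - Y0‖ ^ 2) / (2 * τ))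
        = τ * ⟪K X1, Y1 - yp⟫
          + (‖yp - Y0‖ ^ 2 - ‖yp - Y1‖ ^ 2 - ‖Y1 - Y0‖ ^ 2) / 2 := by
      field_simp
    exact le_of_mul_le_mul_left (by rw [h7]; exact hIIτ) hτ
  -- adjoint identities
  have e1 : ⟪W, X1 - xp⟫ = ⟪Kt Y0, X1 - xp⟫ + ⟪Kt (Y0 - Ym), X1 - xp⟫ := by
    have h1 : (2 : ℝ) • Y0 - Ym = Y0 + (Y0 - Ym) := by module
    rw [hW, h1, map_add, inner_add_left]
  have e2a : ⟪K X1, Y1 - yp⟫ = ⟪K X1, Y1⟫ - ⟪K X1, yp⟫ := inner_sub_right _ _ _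
  have e2b : ⟪Kt Y1, X1 - xp⟫ = ⟪K X1, Y1⟫ - ⟪K xp, Y1⟫ := by
    rw [hKt, ContinuousLinearMap.adjoint_inner_left, map_sub, inner_sub_right,
      real_inner_comm Y1 (K X1), real_inner_comm Y1 (K xp)]
  have e3 : ⟪Kt (Y1 - Y0), X1 - xp⟫ = ⟪Kt Y1, X1 - xp⟫ - ⟪Kt Y0, X1 - xp⟫ := by
    rw [map_sub, inner_sub_left]
  have e4 : ⟪Kt (Y0 - Ym), X0 - xp⟫ - ⟪Kt (Y0 - Ym), X1 - xp⟫ = ⟪Kt (Y0 - Ym), X0 - X1⟫ := by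
    rw [← inner_sub_right]; congr 1; abel
  -- cross bound
  have hIV : ⟪Kt (Y0 - Ym), X0 - X1⟫
      ≤ Real.sqrt (τ * σ) * ‖K‖ * (‖X0 - X1‖ ^ 2 / (2 * σ))
        + Real.sqrt (τ * σ) * ‖K‖ * (‖Ym - Y0‖ ^ 2 / (2 * τ)) := by
    have h1 : ⟪Kt (Y0 - Ym), X0 - X1⟫ ≤ ‖K‖ * ‖Ym - Y0‖ * ‖X0 - X1‖ := by
      rw [hKt, ContinuousLinearMap.adjoint_inner_left]
      calc ⟪Y0 - Ym, K (X0 - X1)⟫ ≤ ‖Y0 - Ym‖ * ‖K (X0 - X1)‖ := real_inner_le_norm _ _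
        _ ≤ ‖Y0 - Ym‖ * (‖K‖ * ‖X0 - X1‖) :=
            mul_le_mul_of_nonneg_left (K.le_opNorm _) (norm_nonneg _)
        _ = ‖K‖ * ‖Ym - Y0‖ * ‖X0 - X1‖ := by rw [norm_sub_rev Y0 Ym]; ring
    have h2 := amgm_cross ‖K‖ ‖X0 - X1‖ ‖Ym - Y0‖ (Real.sqrt τ) (Real.sqrt σ)
      (norm_nonneg _) (Real.sqrt_pos.2 hτ) (Real.sqrt_pos.2 hσ)
    rw [Real.sq_sqrt hσ.le, Real.sq_sqrt hτ.le, ← Real.sqrt_mul hτ.le σ] at h2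
    linarith [h1, h2]
  rw [norm_sub_rev Y0 Y1]
  ring_nf at hI hII hIV ⊢
  linarith [hI, hII, e1, e2a, e2b, e3, e4, hIV]
end
end

section
/- Under the setting of the extrapolated PD-PIAG iteration (g_k = Σ_i ∇f_i(x_{k−τ_k^i}), x_{k+1} = x_k − σ g_k − σ Kᵀ(2y_k − y_{k−1}), y_{k+1} = Prox_{τ h*}(y_k + τ K x_{k+1})) with f_i convex and L_i-smooth, h* proper closed convex, delays bounded by T, and step sizes σ, τ > 0, the following telescoped bound holds for every M ≥ 1 and every (x,y): ‖x − x_0‖²/(2σ) + ‖y − y_0‖²/(2τ) ≥ Σ_{k=1}^M (L(x_k, y) − L(x, y_k)) + (1 − τσ‖K‖²) ‖x − x_M‖²/(2σ) + ‖y − y_M‖²/(2τ) + (1 − √(τσ)‖K‖ − σL(T+1)²) Σ_{k=1}^M ‖x_k − x_{k−1}‖²/(2σ) + (1 − √(τσ)‖K‖) Σ_{k=1}^{M−1} ‖y_k − y_{k−1}‖²/(2τ), where L = Σ_i L_i and L(x,y) = f(x) + ⟨Kx,y⟩ − h*(y). -/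
open scoped RealInnerProductSpace
open Filter Topology

noncomputable section

section AuxLemmas

open scoped RealInnerProductSpace

variable {E : Type*} [NormedAddCommGroup E] [InnerProductSpace ℝ E]

private lemma aux_small (a b c : ℝ) (hc : 0 ≤ c)
    (H : ∀ t : ℝ, 0 < t → t ≤ 1 → a ≤ b + t * c) : a ≤ b := by
  by_contra hab
  push_neg at hab
  have hε : 0 < a - b := by linarith
  set t := min 1 ((a - b) / (2 * (c + 1))) with ht
  have ht0 : 0 < t := lt_min one_pos (by positivity)
  have := H t ht0 (min_le_left _ _)
  have h2 : t * c ≤ (a - b) / (2 * (c + 1)) * c :=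
    mul_le_mul_of_nonneg_right (min_le_right _ _) hc
  have h3 : (a - b) / (2 * (c + 1)) * c < a - b := by
    rw [div_mul_eq_mul_div, div_lt_iff₀ (by linarith)]
    nlinarith
  linarith

private lemma three_point (a b c : E) :
    2 * ⟪a - b, b - c⟫ = ‖a - c‖ ^ 2 - ‖a - b‖ ^ 2 - ‖b - c‖ ^ 2 := by
  have h : a - c = (a - b) + (b - c) := by abel
  rw [h, norm_add_sq_real]; ring

private lemma norm_add_smul_sq' (a b : E) (t : ℝ) :
    ‖a + t • b‖ ^ 2 = ‖a‖ ^ 2 + 2 * (t * ⟪a, b⟫) + t ^ 2 * ‖b‖ ^ 2 := by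
  rw [norm_add_sq_real, real_inner_smul_right, norm_smul]
  rw [mul_pow]
  rw [Real.norm_eq_abs, sq_abs]

private lemma norm_sub_smul_sq' (a b : E) (t : ℝ) :
    ‖a - t • b‖ ^ 2 = ‖a‖ ^ 2 - 2 * (t * ⟪a, b⟫) + t ^ 2 * ‖b‖ ^ 2 := by
  have h := norm_add_smul_sq' a b (-t)
  rw [neg_smul] at h
  rw [sub_eq_add_neg, h]; ring

private lemma norm_sum_sq_le {ι : Type*} (s : Finset ι) (v : ι → E) :
    ‖∑ j ∈ s, v j‖ ^ 2 ≤ (s.card : ℝ) * ∑ j ∈ s, ‖v j‖ ^ 2 := by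
  have h1 : ‖∑ j ∈ s, v j‖ ≤ ∑ j ∈ s, ‖v j‖ := norm_sum_le _ _
  have h2 : (∑ j ∈ s, ‖v j‖) ^ 2 ≤ (s.card : ℝ) * ∑ j ∈ s, ‖v j‖ ^ 2 := by
    have := Finset.sum_mul_sq_le_sq_mul_sq s (fun _ => (1 : ℝ)) (fun j => ‖v j‖)
    simpa using this
  calc ‖∑ j ∈ s, v j‖ ^ 2 ≤ (∑ j ∈ s, ‖v j‖) ^ 2 := by
        apply pow_le_pow_left₀ (norm_nonneg _) h1
      _ ≤ _ := h2

private lemma Icc_sum_succ' {β : Type*} [AddCommMonoid β] (a b : ℤ) (h : a ≤ b + 1) (f : ℤ → β) :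
    ∑ k ∈ Finset.Icc a (b + 1), f k = (∑ k ∈ Finset.Icc a b, f k) + f (b + 1) := by
  have hins : Finset.Icc a (b + 1) = insert (b + 1) (Finset.Icc a b) := by
    ext k; simp only [Finset.mem_Icc, Finset.mem_insert]; omega
  rw [hins, Finset.sum_insert (by simp [Finset.mem_Icc]), add_comm]

private lemma tele_sum_s5 (g : ℤ → E) (a : ℤ) (n : ℕ) :
    g (a + n) - g a = ∑ m ∈ Finset.Icc (a + 1) (a + n), (g m - g (m - 1)) := by
  induction n with
  | zero => simp
  | succ n ih =>
      have hc : ((n + 1 : ℕ) : ℤ) = (n : ℤ) + 1 := by push_cast; ring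
      rw [hc, ← add_assoc, Icc_sum_succ' _ _ (by omega), ← ih]
      have h : a + (n : ℤ) + 1 - 1 = a + n := by ring
      rw [h]; abel

private lemma coe_sum_ereal {α : Type*} (s : Finset α) (g : α → ℝ) :
    ((∑ k ∈ s, g k : ℝ) : EReal) = ∑ k ∈ s, ((g k : ℝ) : EReal) := by
  induction s using Finset.cons_induction with
  | empty => simp
  | cons a s ha ih => rw [Finset.sum_cons, Finset.sum_cons, EReal.coe_add, ih]

private lemma grad_lower {d : ℕ} {g : EuclideanSpace ℝ (Fin d) → ℝ} {L : ℝ}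
    (hc : ConvexOn ℝ Set.univ g) (hs : LSmooth g L) (z w : EuclideanSpace ℝ (Fin d)) :
    g z + ⟪gradient g z, w - z⟫ ≤ g w := by
  rcases eq_or_ne w z with rfl | hw
  · simp
  set G := gradient g z with hG
  set v := w - z with hv
  have hC : 0 ≤ L / 2 * ‖v‖ ^ 2 := le_trans (abs_nonneg _) (hs.2 z w)
  have key : ∀ t : ℝ, 0 < t → t ≤ 1 → g z + ⟪G, v⟫ ≤ g w + t * (L / 2 * ‖v‖ ^ 2) := by
    intro t ht0 ht1
    have hpt : z + t • v = (1 - t) • z + t • w := by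
      rw [hv, smul_sub, sub_smul, one_smul]; abel
    have hconvineq : g (z + t • v) ≤ (1 - t) * g z + t * g w := by
      rw [hpt]
      exact hc.2 (Set.mem_univ z) (Set.mem_univ w) (by linarith) (le_of_lt ht0) (by ring)
    have hsm := hs.2 z (z + t • v)
    rw [add_sub_cancel_left] at hsm
    have hin : ⟪G, t • v⟫ = t * ⟪G, v⟫ := real_inner_smul_right _ _ _
    have hn : ‖t • v‖ ^ 2 = t ^ 2 * ‖v‖ ^ 2 := by
      rw [norm_smul, mul_pow, Real.norm_eq_abs, sq_abs]
    rw [hin, hn] at hsm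
    have h1 : g z + t * ⟪G, v⟫ - L / 2 * (t ^ 2 * ‖v‖ ^ 2) ≤ g (z + t • v) := by
      have := (abs_le.mp hsm).1
      linarith
    have h2 : t * (g z + ⟪G, v⟫) ≤ t * (g w + t * (L / 2 * ‖v‖ ^ 2)) := by nlinarith
    exact le_of_mul_le_mul_left h2 ht0
  exact aux_small _ _ _ hC key

private lemma prox_finite {d : ℕ} {h : EuclideanSpace ℝ (Fin d) → EReal} {τ : ℝ} (hτ : 0 < τ)
    (hbot : ∀ z, h z ≠ ⊥) {z₀ : EuclideanSpace ℝ (Fin d)} (hz₀ : h z₀ ≠ ⊤)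
    {z p : EuclideanSpace ℝ (Fin d)} (hp : IsProxPt (fun u => (τ : EReal) * h u) z p) :
    h p ≠ ⊤ := by
  intro htop
  have h1 := hp z₀
  simp only [] at h1
  rw [htop] at h1
  have h2 : (τ : EReal) * ⊤ = ⊤ := EReal.coe_mul_top_of_pos hτ
  rw [h2] at h1
  have h3 : h z₀ = ((h z₀).toReal : EReal) := (EReal.coe_toReal hz₀ (hbot z₀)).symm
  rw [h3] at h1
  rw [← EReal.coe_mul, ← EReal.coe_add, EReal.top_add_coe] at h1
  exact (EReal.coe_ne_top _) (top_le_iff.mp h1)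

private lemma prox_ineq {d : ℕ} {h : EuclideanSpace ℝ (Fin d) → EReal} {τ : ℝ} (hτ : 0 < τ)
    (hbot : ∀ z, h z ≠ ⊥) (hconvh : EConvexFn h)
    {z p : EuclideanSpace ℝ (Fin d)} (hp : IsProxPt (fun u => (τ : EReal) * h u) z p)
    (hptop : h p ≠ ⊤) {u : EuclideanSpace ℝ (Fin d)} (hutop : h u ≠ ⊤) :
    τ * (h p).toReal + ‖p - z‖ ^ 2 / 2 + ‖u - p‖ ^ 2 / 2
      ≤ τ * (h u).toReal + ‖u - z‖ ^ 2 / 2 := by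
  set hp' := (h p).toReal
  set hu' := (h u).toReal
  have hP : h p = (hp' : EReal) := (EReal.coe_toReal hptop (hbot p)).symm
  have hU : h u = (hu' : EReal) := (EReal.coe_toReal hutop (hbot u)).symm
  have key : ∀ t : ℝ, 0 < t → t ≤ 1 →
      τ * hp' ≤ (τ * hu' + ⟪p - z, u - p⟫) + t * (‖u - p‖ ^ 2 / 2) := by
    intro t ht0 ht1
    set ut := p + t • (u - p) with hut
    have hcomb : ut = (1 - t) • p + t • u := by
      rw [hut, smul_sub, sub_smul, one_smul]; abel
    have hcv := hconvh p u (1 - t) t (by linarith) ht0.le (by ring)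
    rw [← hcomb, hP, hU] at hcv
    have hr : ((1 - t : ℝ) : EReal) * ((hp' : ℝ) : EReal) + ((t : ℝ) : EReal) * ((hu' : ℝ) : EReal)
        = (((1 - t) * hp' + t * hu' : ℝ) : EReal) := by norm_cast
    rw [hr] at hcv
    have hnetop : h ut ≠ ⊤ := ne_top_of_le_ne_top (EReal.coe_ne_top _) hcv
    set st := (h ut).toReal with hst
    have hUT : h ut = (st : EReal) := (EReal.coe_toReal hnetop (hbot ut)).symm
    have hstle : st ≤ (1 - t) * hp' + t * hu' := by
      rw [hUT] at hcv; exact_mod_cast hcv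
    have hprox := hp ut
    simp only [] at hprox
    rw [hP, hUT, ← EReal.coe_mul, ← EReal.coe_mul, ← EReal.coe_add, ← EReal.coe_add,
      EReal.coe_le_coe_iff] at hprox
    have huz : ut - z = (p - z) + t • (u - p) := by rw [hut]; abel
    have hexp : ‖ut - z‖ ^ 2 = ‖p - z‖ ^ 2 + 2 * (t * ⟪p - z, u - p⟫) + t ^ 2 * ‖u - p‖ ^ 2 := by
      rw [huz, norm_add_smul_sq']
    rw [hexp] at hprox
    have hts : τ * st ≤ τ * ((1 - t) * hp' + t * hu') :=
      mul_le_mul_of_nonneg_left hstle hτ.le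
    have h2 : t * (τ * hp') ≤ t * ((τ * hu' + ⟪p - z, u - p⟫) + t * (‖u - p‖ ^ 2 / 2)) := by
      nlinarith
    exact le_of_mul_le_mul_left h2 ht0
  have hmain : τ * hp' ≤ τ * hu' + ⟪p - z, u - p⟫ := aux_small _ _ _ (by positivity) key
  have hfin : ‖u - z‖ ^ 2 = ‖p - z‖ ^ 2 + 2 * ((1 : ℝ) * ⟪p - z, u - p⟫)
      + (1 : ℝ) ^ 2 * ‖u - p‖ ^ 2 := by
    have h1 : u - z = (p - z) + (1 : ℝ) • (u - p) := by rw [one_smul]; abel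
    rw [h1, norm_add_smul_sq']
  rw [hfin]; nlinarith [hmain]

private lemma per_step
    {d₁ d₂ N : ℕ}
    (f : Fin N → EuclideanSpace ℝ (Fin d₁) → ℝ) (Lc : Fin N → ℝ)
    (hconv : ∀ i, ConvexOn ℝ Set.univ (f i))
    (hsmooth : ∀ i, LSmooth (f i) (Lc i))
    (hstar : EuclideanSpace ℝ (Fin d₂) → EReal)
    (hbot : ∀ z, hstar z ≠ ⊥) (hconvh : EConvexFn hstar)
    (K : EuclideanSpace ℝ (Fin d₁) →L[ℝ] EuclideanSpace ℝ (Fin d₂))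
    (σ τ : ℝ) (hσ : 0 < σ) (hτ : 0 < τ)
    (x : ℤ → EuclideanSpace ℝ (Fin d₁)) (y : ℤ → EuclideanSpace ℝ (Fin d₂))
    (dly : ℤ → Fin N → ℕ)
    (hxiter : ∀ k : ℤ, 0 ≤ k →
      x (k + 1) = x k - σ • (∑ i, gradient (f i) (x (k - (dly k i : ℤ))))
        - σ • (ContinuousLinearMap.adjoint K) ((2 : ℝ) • y k - y (k - 1)))
    (hyiter : ∀ k : ℤ, 0 ≤ k →
      IsProxPt (fun u => (τ : EReal) * hstar u) (y k + τ • K (x (k + 1))) (y (k + 1)))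
    (xp : EuclideanSpace ℝ (Fin d₁)) (yp : EuclideanSpace ℝ (Fin d₂))
    (hyp : hstar yp ≠ ⊤)
    (hfin : ∀ k : ℤ, 0 ≤ k → hstar (y (k + 1)) ≠ ⊤)
    (k : ℤ) (hk : 0 ≤ k) :
    ((∑ i, f i (x (k + 1))) + ⟪K (x (k + 1)), yp⟫ - (hstar yp).toReal)
      - ((∑ i, f i xp) + ⟪K xp, y (k + 1)⟫ - (hstar (y (k + 1))).toReal)
    ≤ (‖xp - x k‖ ^ 2 - ‖xp - x (k + 1)‖ ^ 2 - ‖x (k + 1) - x k‖ ^ 2) / (2 * σ)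
      + (‖yp - y k‖ ^ 2 - ‖yp - y (k + 1)‖ ^ 2 - ‖y (k + 1) - y k‖ ^ 2) / (2 * τ)
      + ⟪K (x (k + 1)) - K xp, y (k + 1) - y k⟫
      - ⟪K (x k) - K xp, y k - y (k - 1)⟫
      - ⟪K (x (k + 1)) - K (x k), y k - y (k - 1)⟫
      + ∑ i, Lc i / 2 * ‖x (k + 1) - x (k - (dly k i : ℤ))‖ ^ 2 := by
  set g := ∑ i, gradient (f i) (x (k - (dly k i : ℤ))) with hg
  set w := (ContinuousLinearMap.adjoint K) ((2 : ℝ) • y k - y (k - 1)) with hwdef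
  have hxx : x k - x (k + 1) = σ • (g + w) := by
    rw [hxiter k hk, smul_add]; abel
  have hA : ⟪g + w, x (k + 1) - xp⟫
      = (‖xp - x k‖ ^ 2 - ‖xp - x (k + 1)‖ ^ 2 - ‖x (k + 1) - x k‖ ^ 2) / (2 * σ) := by
    have h3p := three_point (x k) (x (k + 1)) xp
    have hsm : ⟪x k - x (k + 1), x (k + 1) - xp⟫ = σ * ⟪g + w, x (k + 1) - xp⟫ := by
      rw [hxx, real_inner_smul_left]
    rw [norm_sub_rev (x k) xp, norm_sub_rev (x (k + 1)) xp,
      norm_sub_rev (x k) (x (k + 1))] at h3p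
    rw [eq_div_iff (by positivity : (2 : ℝ) * σ ≠ 0)]
    linear_combination h3p - 2 * hsm
  have hF : (∑ i, f i (x (k + 1))) - (∑ i, f i xp)
      ≤ ⟪g, x (k + 1) - xp⟫ + ∑ i, Lc i / 2 * ‖x (k + 1) - x (k - (dly k i : ℤ))‖ ^ 2 := by
    have hper : ∀ i : Fin N, f i (x (k + 1)) - f i xp
        ≤ ⟪gradient (f i) (x (k - (dly k i : ℤ))), x (k + 1) - xp⟫
          + Lc i / 2 * ‖x (k + 1) - x (k - (dly k i : ℤ))‖ ^ 2 := by
      intro i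
      set zi := x (k - (dly k i : ℤ)) with hzi
      have hup := (abs_le.mp ((hsmooth i).2 zi (x (k + 1)))).2
      have hlo := grad_lower (hconv i) (hsmooth i) zi xp
      have hsplit : ⟪gradient (f i) zi, x (k + 1) - zi⟫ - ⟪gradient (f i) zi, xp - zi⟫
          = ⟪gradient (f i) zi, x (k + 1) - xp⟫ := by
        rw [← inner_sub_right]
        congr 1
        abel
      linarith
    calc (∑ i, f i (x (k + 1))) - (∑ i, f i xp)
        = ∑ i, (f i (x (k + 1)) - f i xp) := by rw [Finset.sum_sub_distrib]
      _ ≤ ∑ i, (⟪gradient (f i) (x (k - (dly k i : ℤ))), x (k + 1) - xp⟫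
            + Lc i / 2 * ‖x (k + 1) - x (k - (dly k i : ℤ))‖ ^ 2) :=
          Finset.sum_le_sum (fun i _ => hper i)
      _ = ⟪g, x (k + 1) - xp⟫ + ∑ i, Lc i / 2 * ‖x (k + 1) - x (k - (dly k i : ℤ))‖ ^ 2 := by
          rw [Finset.sum_add_distrib, hg, sum_inner]
  have hY : (hstar (y (k + 1))).toReal - (hstar yp).toReal
      ≤ ⟪K (x (k + 1)), y (k + 1) - yp⟫
        + (‖yp - y k‖ ^ 2 - ‖yp - y (k + 1)‖ ^ 2 - ‖y (k + 1) - y k‖ ^ 2) / (2 * τ) := by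
    have hpx := prox_ineq hτ hbot hconvh (hyiter k hk) (hfin k hk) hyp
    have e1 : y (k + 1) - (y k + τ • K (x (k + 1)))
        = (y (k + 1) - y k) - τ • K (x (k + 1)) := by abel
    have e2 : yp - (y k + τ • K (x (k + 1))) = (yp - y k) - τ • K (x (k + 1)) := by abel
    rw [e1, e2, norm_sub_smul_sq', norm_sub_smul_sq'] at hpx
    have hi : ⟪y (k + 1) - y k, K (x (k + 1))⟫ - ⟪yp - y k, K (x (k + 1))⟫
        = ⟪K (x (k + 1)), y (k + 1) - yp⟫ := by
      rw [← inner_sub_left, real_inner_comm]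
      congr 1
      abel
    have hgoal2 : τ * ((hstar (y (k + 1))).toReal - (hstar yp).toReal)
        ≤ τ * ⟪K (x (k + 1)), y (k + 1) - yp⟫
          + (‖yp - y k‖ ^ 2 - ‖yp - y (k + 1)‖ ^ 2 - ‖y (k + 1) - y k‖ ^ 2) / 2 := by
      rw [← hi]
      linarith [hpx]
    have h2τ : (0 : ℝ) < 2 * τ := by linarith
    have h3 : (hstar (y (k + 1))).toReal - (hstar yp).toReal - ⟪K (x (k + 1)), y (k + 1) - yp⟫
        ≤ (‖yp - y k‖ ^ 2 - ‖yp - y (k + 1)‖ ^ 2 - ‖y (k + 1) - y k‖ ^ 2) / (2 * τ) := by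
      rw [le_div_iff₀ h2τ]
      linarith [hgoal2]
    linarith
  have hw : ⟪w, x (k + 1) - xp⟫ = ⟪K (x (k + 1)) - K xp, (2 : ℝ) • y k - y (k - 1)⟫ := by
    rw [hwdef, ContinuousLinearMap.adjoint_inner_left, real_inner_comm, map_sub]
  have hA' : ⟪g, x (k + 1) - xp⟫ + ⟪K (x (k + 1)) - K xp, (2 : ℝ) • y k - y (k - 1)⟫
      = (‖xp - x k‖ ^ 2 - ‖xp - x (k + 1)‖ ^ 2 - ‖x (k + 1) - x k‖ ^ 2) / (2 * σ) := by
    rw [← hw, ← inner_add_left, hA]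
  have hid : ⟪K (x (k + 1)), yp⟫ - ⟪K xp, y (k + 1)⟫ + ⟪K (x (k + 1)), y (k + 1) - yp⟫
      - ⟪K (x (k + 1)) - K xp, (2 : ℝ) • y k - y (k - 1)⟫
      = ⟪K (x (k + 1)) - K xp, y (k + 1) - y k⟫ - ⟪K (x k) - K xp, y k - y (k - 1)⟫
        - ⟪K (x (k + 1)) - K (x k), y k - y (k - 1)⟫ := by
    simp only [inner_sub_left, inner_sub_right, real_inner_smul_right]
    ring
  linarith [hF, hY, hA', hid]

private lemma star_abstract (gap E P Q dx dy D X : ℤ → ℝ)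
    (hstep : ∀ k : ℤ, 0 ≤ k → gap (k + 1)
      ≤ (P k - P (k + 1) - dx (k + 1)) + (Q k - Q (k + 1) - dy (k + 1))
        + D k - D (k - 1) - X k + E k)
    (hX0 : X 0 = 0) (hD : D (-1) = 0) :
    ∀ m : ℤ, 1 ≤ m →
      ∑ k ∈ Finset.Icc (1 : ℤ) m, gap k
        ≤ P 0 + Q 0 - P m - Q m + D (m - 1)
          - ∑ k ∈ Finset.Icc (1 : ℤ) m, dx k
          - ∑ k ∈ Finset.Icc (1 : ℤ) m, dy k
          - ∑ k ∈ Finset.Icc (1 : ℤ) (m - 1), X k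
          + ∑ k ∈ Finset.Icc (0 : ℤ) (m - 1), E k := by
  refine Int.le_induction ?_ ?_
  · have h0 := hstep 0 le_rfl
    simp only [zero_add, zero_sub, sub_self] at h0 ⊢
    rw [hD, hX0] at h0
    rw [Finset.Icc_self, Finset.Icc_self,
      Finset.Icc_eq_empty (by omega : ¬(1:ℤ) ≤ 0)]
    simp only [Finset.sum_singleton, Finset.sum_empty]
    linarith
  · intro n hn ih
    have hstepn := hstep n (by omega)
    have e1 : ∑ k ∈ Finset.Icc (1 : ℤ) (n + 1), gap k
        = (∑ k ∈ Finset.Icc (1 : ℤ) n, gap k) + gap (n + 1) := Icc_sum_succ' _ _ (by omega) _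
    have e2 : ∑ k ∈ Finset.Icc (1 : ℤ) (n + 1), dx k
        = (∑ k ∈ Finset.Icc (1 : ℤ) n, dx k) + dx (n + 1) := Icc_sum_succ' _ _ (by omega) _
    have e3 : ∑ k ∈ Finset.Icc (1 : ℤ) (n + 1), dy k
        = (∑ k ∈ Finset.Icc (1 : ℤ) n, dy k) + dy (n + 1) := Icc_sum_succ' _ _ (by omega) _
    have e4 : ∑ k ∈ Finset.Icc (1 : ℤ) (n + 1 - 1), X k
        = (∑ k ∈ Finset.Icc (1 : ℤ) (n - 1), X k) + X n := by
      rw [show n + 1 - 1 = (n - 1) + 1 by ring, Icc_sum_succ' _ _ (by omega) _,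
        show n - 1 + 1 = n by ring]
    have e5 : ∑ k ∈ Finset.Icc (0 : ℤ) (n + 1 - 1), E k
        = (∑ k ∈ Finset.Icc (0 : ℤ) (n - 1), E k) + E n := by
      rw [show n + 1 - 1 = (n - 1) + 1 by ring, Icc_sum_succ' _ _ (by omega) _,
        show n - 1 + 1 = n by ring]
    rw [e1, e2, e3, e4, e5, show n + 1 - 1 = n by ring]
    linarith [ih]

private lemma shift_sum_le (a : ℤ → ℝ) (ha : ∀ k, 0 ≤ a k) (M : ℤ) :
    ∑ k ∈ Finset.Icc (1 : ℤ) (M - 1), a (k + 1) ≤ ∑ k ∈ Finset.Icc (1 : ℤ) M, a k := by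
  have h1 : ∑ k ∈ Finset.Icc (1 : ℤ) (M - 1), a (k + 1)
      = ∑ k ∈ Finset.Icc (2 : ℤ) M, a k := by
    rw [show (2 : ℤ) = 1 + 1 by norm_num, show M = (M - 1) + 1 by ring,
      ← Finset.map_add_right_Icc, Finset.sum_map]
    simp [addRightEmbedding]
  rw [h1]
  apply Finset.sum_le_sum_of_subset_of_nonneg
  · intro k hk; simp only [Finset.mem_Icc] at *; omega
  · intro k _ _; exact ha k

private lemma count_bound (b : ℤ → ℝ) (hb : ∀ m, 0 ≤ b m) (hb0 : ∀ m : ℤ, m ≤ 0 → b m = 0)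
    (T : ℕ) (M : ℤ) :
    ∑ k ∈ Finset.Icc (1 : ℤ) M, ∑ m ∈ Finset.Icc (k - (T : ℤ)) k, b m
      ≤ ((T : ℝ) + 1) * ∑ m ∈ Finset.Icc (1 : ℤ) M, b m := by
  have step1 : ∀ k ∈ Finset.Icc (1 : ℤ) M, ∑ m ∈ Finset.Icc (k - (T : ℤ)) k, b m
      = ∑ m ∈ Finset.Icc (1 : ℤ) M, if k - (T : ℤ) ≤ m ∧ m ≤ k then b m else 0 := by
    intro k hk
    rw [Finset.mem_Icc] at hk
    rw [← Finset.sum_filter]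
    refine (Finset.sum_subset ?_ ?_).symm
    · intro m hm
      simp only [Finset.mem_filter, Finset.mem_Icc] at hm ⊢
      omega
    · intro m hm hnm
      simp only [Finset.mem_filter, Finset.mem_Icc] at hm hnm
      exact hb0 m (by omega)
  rw [Finset.sum_congr rfl step1, Finset.sum_comm]
  have inner : ∀ m ∈ Finset.Icc (1 : ℤ) M,
      (∑ k ∈ Finset.Icc (1 : ℤ) M, if k - (T : ℤ) ≤ m ∧ m ≤ k then b m else 0)
        ≤ ((T : ℝ) + 1) * b m := by
    intro m hm
    have hiff : ∀ k : ℤ, ((k - (T : ℤ) ≤ m ∧ m ≤ k) ↔ k ∈ Finset.Icc m (m + (T : ℤ))) := by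
      intro k; simp only [Finset.mem_Icc]; omega
    have e1 : (∑ k ∈ Finset.Icc (1 : ℤ) M, if k - (T : ℤ) ≤ m ∧ m ≤ k then b m else 0)
        = ∑ k ∈ Finset.Icc (1 : ℤ) M ∩ Finset.Icc m (m + (T : ℤ)), b m := by
      rw [← Finset.sum_ite_mem]
      exact Finset.sum_congr rfl (fun k _ => by rw [if_congr (hiff k) rfl rfl])
    rw [e1, Finset.sum_const, nsmul_eq_mul]
    have hcard : ((Finset.Icc (1 : ℤ) M ∩ Finset.Icc m (m + (T : ℤ))).card : ℝ) ≤ (T : ℝ) + 1 := by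
      have h2 : (Finset.Icc (1 : ℤ) M ∩ Finset.Icc m (m + (T : ℤ))).card
          ≤ (Finset.Icc m (m + (T : ℤ))).card :=
        Finset.card_le_card (Finset.inter_subset_right)
      have h3 : (Finset.Icc m (m + (T : ℤ))).card = T + 1 := by
        rw [Int.card_Icc]; omega
      rw [h3] at h2
      exact_mod_cast h2
    exact mul_le_mul_of_nonneg_right hcard (hb m)
  calc ∑ m ∈ Finset.Icc (1 : ℤ) M, (∑ k ∈ Finset.Icc (1 : ℤ) M,
        if k - (T : ℤ) ≤ m ∧ m ≤ k then b m else 0)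
      ≤ ∑ m ∈ Finset.Icc (1 : ℤ) M, ((T : ℝ) + 1) * b m := Finset.sum_le_sum inner
    _ = ((T : ℝ) + 1) * ∑ m ∈ Finset.Icc (1 : ℤ) M, b m := by rw [Finset.mul_sum]

private lemma chain_bound (x : ℤ → E) (T : ℕ) (k : ℤ) (t : ℕ) (ht : t ≤ T) :
    ‖x (k + 1) - x (k - (t : ℤ))‖ ^ 2
      ≤ ((T : ℝ) + 1) * ∑ m ∈ Finset.Icc (k + 1 - (T : ℤ)) (k + 1), ‖x m - x (m - 1)‖ ^ 2 := by
  have htele := tele_sum_s5 x (k - (t : ℤ)) (t + 1)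
  have hidx : (k - (t : ℤ)) + ((t + 1 : ℕ) : ℤ) = k + 1 := by push_cast; ring
  rw [hidx] at htele
  rw [htele]
  have hcs := norm_sum_sq_le (Finset.Icc (k - (t : ℤ) + 1) (k + 1)) (fun m => x m - x (m - 1))
  have hcard : ((Finset.Icc (k - (t : ℤ) + 1) (k + 1)).card : ℝ) = (t : ℝ) + 1 := by
    rw [Int.card_Icc, show k + 1 + 1 - (k - (t : ℤ) + 1) = ((t + 1 : ℕ) : ℤ) by push_cast; ring,
      Int.toNat_natCast]
    push_cast; ring
  rw [hcard] at hcs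
  have hsub : ∑ m ∈ Finset.Icc (k - (t : ℤ) + 1) (k + 1), ‖x m - x (m - 1)‖ ^ 2
      ≤ ∑ m ∈ Finset.Icc (k + 1 - (T : ℤ)) (k + 1), ‖x m - x (m - 1)‖ ^ 2 := by
    apply Finset.sum_le_sum_of_subset_of_nonneg
    · intro m hm; simp only [Finset.mem_Icc] at *; omega
    · intro m _ _; positivity
  have hnn : (0 : ℝ) ≤ ∑ m ∈ Finset.Icc (k - (t : ℤ) + 1) (k + 1), ‖x m - x (m - 1)‖ ^ 2 := by
    positivity
  calc ‖∑ m ∈ Finset.Icc (k - (t : ℤ) + 1) (k + 1), (x m - x (m - 1))‖ ^ 2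
      ≤ ((t : ℝ) + 1) * ∑ m ∈ Finset.Icc (k - (t : ℤ) + 1) (k + 1), ‖x m - x (m - 1)‖ ^ 2 := hcs
    _ ≤ ((T : ℝ) + 1) * ∑ m ∈ Finset.Icc (k + 1 - (T : ℤ)) (k + 1), ‖x m - x (m - 1)‖ ^ 2 := by
        apply mul_le_mul _ hsub hnn (by positivity)
        have h : (t : ℝ) ≤ (T : ℝ) := by exact_mod_cast ht
        linarith

private lemma young1 (Kn a b τ : ℝ) (hτ : 0 < τ) (hK : 0 ≤ Kn) :
    Kn * a * b ≤ τ * Kn ^ 2 * a ^ 2 / 2 + b ^ 2 / (2 * τ) := by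
  rw [← sub_nonneg]
  have hexp : τ * Kn ^ 2 * a ^ 2 / 2 + b ^ 2 / (2 * τ) - Kn * a * b
      = (τ * Kn * a - b) ^ 2 / (2 * τ) := by
    field_simp
    ring
  rw [hexp]
  positivity

private lemma young2 (Kn a b σ τ : ℝ) (hσ : 0 < σ) (hτ : 0 < τ) (hK : 0 ≤ Kn) :
    Kn * a * b ≤ Real.sqrt (τ * σ) * Kn * (a ^ 2 / (2 * σ) + b ^ 2 / (2 * τ)) := by
  set u := Real.sqrt τ with hu'
  set v := Real.sqrt σ with hv'
  have hu : u ^ 2 = τ := Real.sq_sqrt hτ.le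
  have hv : v ^ 2 = σ := Real.sq_sqrt hσ.le
  have hu0 : 0 < u := Real.sqrt_pos.mpr hτ
  have hv0 : 0 < v := Real.sqrt_pos.mpr hσ
  have hs : Real.sqrt (τ * σ) = u * v := by
    rw [hu', hv', ← Real.sqrt_mul hτ.le]
  rw [hs, ← hu, ← hv, ← sub_nonneg]
  have hexp : u * v * Kn * (a ^ 2 / (2 * v ^ 2) + b ^ 2 / (2 * u ^ 2)) - Kn * a * b
      = Kn * (u * a - v * b) ^ 2 / (2 * u * v) := by
    field_simp
    ring
  rw [hexp]
  apply div_nonneg (mul_nonneg hK (sq_nonneg _)) (by positivity)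

end AuxLemmas

set_option maxHeartbeats 2000000 in
/-- Telescoped estimate for the extrapolated PD-PIAG iteration, inequality (26). -/
theorem stmt_5
    (d₁ d₂ N T : ℕ)
    (f : Fin N → EuclideanSpace ℝ (Fin d₁) → ℝ) (Lc : Fin N → ℝ)
    (hconv : ∀ i, ConvexOn ℝ Set.univ (f i))
    (hsmooth : ∀ i, LSmooth (f i) (Lc i))
    (hstar : EuclideanSpace ℝ (Fin d₂) → EReal)
    (hproper : EProper hstar) (hlsc : LowerSemicontinuous hstar) (hconvh : EConvexFn hstar)
    (K : EuclideanSpace ℝ (Fin d₁) →L[ℝ] EuclideanSpace ℝ (Fin d₂))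
    (σ τ : ℝ) (hσ : 0 < σ) (hτ : 0 < τ)
    (x : ℤ → EuclideanSpace ℝ (Fin d₁)) (y : ℤ → EuclideanSpace ℝ (Fin d₂))
    (hx0 : ∀ k : ℤ, k ≤ 0 → x k = x 0) (hy0 : ∀ k : ℤ, k ≤ 0 → y k = y 0)
    (dly : ℤ → Fin N → ℕ) (hdly : ∀ (k : ℤ) (i : Fin N), dly k i ≤ T)
    (hxiter : ∀ k : ℤ, 0 ≤ k →
      x (k + 1) = x k - σ • (∑ i, gradient (f i) (x (k - (dly k i : ℤ))))
        - σ • (ContinuousLinearMap.adjoint K) ((2 : ℝ) • y k - y (k - 1)))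
    (hyiter : ∀ k : ℤ, 0 ≤ k →
      IsProxPt (fun u => (τ : EReal) * hstar u) (y k + τ • K (x (k + 1))) (y (k + 1)))
 :
    ∀ M : ℕ, 1 ≤ M → ∀ (xp : EuclideanSpace ℝ (Fin d₁)) (yp : EuclideanSpace ℝ (Fin d₂)),
      (∑ k ∈ Finset.Icc (1 : ℤ) (M : ℤ),
          (Lagr (fun z => ∑ i, f i z) hstar K (x k) yp - Lagr (fun z => ∑ i, f i z) hstar K xp (y k)))
        + (((1 - τ * σ * ‖K‖ ^ 2) * (‖xp - x (M : ℤ)‖ ^ 2 / (2 * σ))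
            + ‖yp - y (M : ℤ)‖ ^ 2 / (2 * τ)
            + (1 - Real.sqrt (τ * σ) * ‖K‖ - σ * (∑ i, Lc i) * ((T : ℝ) + 1) ^ 2)
              * ∑ k ∈ Finset.Icc (1 : ℤ) (M : ℤ), ‖x k - x (k - 1)‖ ^ 2 / (2 * σ)
            + (1 - Real.sqrt (τ * σ) * ‖K‖)
              * ∑ k ∈ Finset.Icc (1 : ℤ) ((M : ℤ) - 1), ‖y k - y (k - 1)‖ ^ 2 / (2 * τ) : ℝ) : EReal)
        ≤ ((‖xp - x 0‖ ^ 2 / (2 * σ) + ‖yp - y 0‖ ^ 2 / (2 * τ) : ℝ) : EReal) := by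
  classical
  intro M hM xp yp
  obtain ⟨z₀, hz₀⟩ := hproper.1
  have hM1 : (1 : ℤ) ≤ (M : ℤ) := by exact_mod_cast hM
  have hfin' : ∀ k : ℤ, 1 ≤ k → hstar (y k) ≠ ⊤ := by
    intro k hk
    have h := prox_finite hτ hproper.2 hz₀ (hyiter (k - 1) (by omega))
    rwa [show k - 1 + 1 = k by ring] at h
  by_cases hyptop : hstar yp = ⊤
  · -- degenerate case: the Lagrangian gap is `⊥`
    have h1M : (1 : ℤ) ∈ Finset.Icc (1 : ℤ) (M : ℤ) := by
      simp only [Finset.mem_Icc]; exact ⟨le_refl _, hM1⟩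
    have hbot1 : Lagr (fun z => ∑ i, f i z) hstar K (x 1) yp
        - Lagr (fun z => ∑ i, f i z) hstar K xp (y 1) = ⊥ := by
      have h1 : Lagr (fun z => ∑ i, f i z) hstar K (x 1) yp = ⊥ := by
        simp only [Lagr, hyptop]
        rw [sub_eq_add_neg, EReal.neg_top, EReal.add_bot]
      rw [h1, sub_eq_add_neg, EReal.bot_add]
    have hsum : (∑ k ∈ Finset.Icc (1 : ℤ) (M : ℤ),
        (Lagr (fun z => ∑ i, f i z) hstar K (x k) yp
          - Lagr (fun z => ∑ i, f i z) hstar K xp (y k))) = ⊥ := by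
      rw [← Finset.add_sum_erase _ _ h1M, hbot1, EReal.bot_add]
    rw [hsum, EReal.bot_add]
    exact bot_le
  -- main case
  have hypne : hstar yp ≠ ⊤ := hyptop
  have hYPc : hstar yp = (((hstar yp).toReal : ℝ) : EReal) :=
    (EReal.coe_toReal hypne (hproper.2 yp)).symm
  have hfin : ∀ k : ℤ, 0 ≤ k → hstar (y (k + 1)) ≠ ⊤ := fun k hk => hfin' (k + 1) (by omega)
  -- reduce the EReal sum to a real sum
  have hsummand : ∀ k ∈ Finset.Icc (1 : ℤ) (M : ℤ),
      Lagr (fun z => ∑ i, f i z) hstar K (x k) yp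
        - Lagr (fun z => ∑ i, f i z) hstar K xp (y k)
      = ((((∑ i, f i (x k)) + ⟪K (x k), yp⟫ - (hstar yp).toReal)
          - ((∑ i, f i xp) + ⟪K xp, y k⟫ - (hstar (y k)).toReal) : ℝ) : EReal) := by
    intro k hk
    have hk1 : (1 : ℤ) ≤ k := (Finset.mem_Icc.mp hk).1
    have hYkc : hstar (y k) = (((hstar (y k)).toReal : ℝ) : EReal) :=
      (EReal.coe_toReal (hfin' k hk1) (hproper.2 _)).symm
    simp only [Lagr]
    rw [hYPc, hYkc]
    norm_cast
  rw [Finset.sum_congr rfl hsummand, ← coe_sum_ereal, ← EReal.coe_add, EReal.coe_le_coe_iff]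
  -- the telescoped inequality for the real quantities
  have hstar_ineq := star_abstract
      (fun k => ((∑ i, f i (x k)) + ⟪K (x k), yp⟫ - (hstar yp).toReal)
        - ((∑ i, f i xp) + ⟪K xp, y k⟫ - (hstar (y k)).toReal))
      (fun k => ∑ i, Lc i / 2 * ‖x (k + 1) - x (k - (dly k i : ℤ))‖ ^ 2)
      (fun k => ‖xp - x k‖ ^ 2 / (2 * σ))
      (fun k => ‖yp - y k‖ ^ 2 / (2 * τ))
      (fun k => ‖x k - x (k - 1)‖ ^ 2 / (2 * σ))
      (fun k => ‖y k - y (k - 1)‖ ^ 2 / (2 * τ))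
      (fun k => ⟪K (x (k + 1)) - K xp, y (k + 1) - y k⟫)
      (fun k => ⟪K (x (k + 1)) - K (x k), y k - y (k - 1)⟫)
      (by
        intro k hk
        beta_reduce
        have hps := per_step f Lc hconv hsmooth hstar hproper.2 hconvh K σ τ hσ hτ x y dly
          hxiter hyiter xp yp hypne hfin k hk
        rw [show k + 1 - 1 = k by ring, show k - 1 + 1 = k by ring]
        have e1 : (‖xp - x k‖ ^ 2 - ‖xp - x (k + 1)‖ ^ 2 - ‖x (k + 1) - x k‖ ^ 2) / (2 * σ)
            = ‖xp - x k‖ ^ 2 / (2 * σ) - ‖xp - x (k + 1)‖ ^ 2 / (2 * σ)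
              - ‖x (k + 1) - x k‖ ^ 2 / (2 * σ) := by ring
        have e2 : (‖yp - y k‖ ^ 2 - ‖yp - y (k + 1)‖ ^ 2 - ‖y (k + 1) - y k‖ ^ 2) / (2 * τ)
            = ‖yp - y k‖ ^ 2 / (2 * τ) - ‖yp - y (k + 1)‖ ^ 2 / (2 * τ)
              - ‖y (k + 1) - y k‖ ^ 2 / (2 * τ) := by ring
        linarith [hps])
      (by
        beta_reduce
        rw [show (0 : ℤ) - 1 = -1 by ring, hy0 (-1) (by norm_num), sub_self, inner_zero_right])
      (by
        beta_reduce
        rw [show (-1 : ℤ) + 1 = 0 by ring, hy0 (-1) (by norm_num), sub_self, inner_zero_right])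
      (M : ℤ) hM1
  beta_reduce at hstar_ineq
  rw [show (M : ℤ) - 1 + 1 = (M : ℤ) by ring] at hstar_ineq
  -- (a) bound on the final coupling term
  have ha : ⟪K (x (M : ℤ)) - K xp, y (M : ℤ) - y ((M : ℤ) - 1)⟫
      ≤ τ * σ * ‖K‖ ^ 2 * (‖xp - x (M : ℤ)‖ ^ 2 / (2 * σ))
        + ‖y (M : ℤ) - y ((M : ℤ) - 1)‖ ^ 2 / (2 * τ) := by
    have h1 : ⟪K (x (M : ℤ)) - K xp, y (M : ℤ) - y ((M : ℤ) - 1)⟫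
        ≤ ‖K‖ * ‖x (M : ℤ) - xp‖ * ‖y (M : ℤ) - y ((M : ℤ) - 1)‖ := by
      calc ⟪K (x (M : ℤ)) - K xp, y (M : ℤ) - y ((M : ℤ) - 1)⟫
          ≤ ‖K (x (M : ℤ)) - K xp‖ * ‖y (M : ℤ) - y ((M : ℤ) - 1)‖ := real_inner_le_norm _ _
        _ ≤ ‖K‖ * ‖x (M : ℤ) - xp‖ * ‖y (M : ℤ) - y ((M : ℤ) - 1)‖ := by
            apply mul_le_mul_of_nonneg_right _ (norm_nonneg _)
            rw [← map_sub]; exact K.le_opNorm _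
    have h2 := young1 ‖K‖ (‖x (M : ℤ) - xp‖) (‖y (M : ℤ) - y ((M : ℤ) - 1)‖) τ hτ (norm_nonneg K)
    have h3 : τ * σ * ‖K‖ ^ 2 * (‖xp - x (M : ℤ)‖ ^ 2 / (2 * σ))
        = τ * ‖K‖ ^ 2 * ‖x (M : ℤ) - xp‖ ^ 2 / 2 := by
      rw [norm_sub_rev xp (x (M : ℤ))]
      field_simp
    linarith [h1, h2, h3]
  -- (b) bound on the cross terms
  have hXbnd : ∀ k ∈ Finset.Icc (1 : ℤ) ((M : ℤ) - 1),
      -⟪K (x (k + 1)) - K (x k), y k - y (k - 1)⟫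
        ≤ Real.sqrt (τ * σ) * ‖K‖ * (‖x (k + 1) - x k‖ ^ 2 / (2 * σ))
          + Real.sqrt (τ * σ) * ‖K‖ * (‖y k - y (k - 1)‖ ^ 2 / (2 * τ)) := by
    intro k _
    have h1 : -⟪K (x (k + 1)) - K (x k), y k - y (k - 1)⟫
        ≤ ‖K‖ * ‖x (k + 1) - x k‖ * ‖y k - y (k - 1)‖ := by
      have habs := abs_real_inner_le_norm (K (x (k + 1)) - K (x k)) (y k - y (k - 1))
      have hop : ‖K (x (k + 1)) - K (x k)‖ * ‖y k - y (k - 1)‖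
          ≤ ‖K‖ * ‖x (k + 1) - x k‖ * ‖y k - y (k - 1)‖ := by
        apply mul_le_mul_of_nonneg_right _ (norm_nonneg _)
        rw [← map_sub]; exact K.le_opNorm _
      have := neg_abs_le ⟪K (x (k + 1)) - K (x k), y k - y (k - 1)⟫
      linarith
    have h2 := young2 ‖K‖ (‖x (k + 1) - x k‖) (‖y k - y (k - 1)‖) σ τ hσ hτ (norm_nonneg K)
    nlinarith [h1, h2]
  have hshift : ∑ k ∈ Finset.Icc (1 : ℤ) ((M : ℤ) - 1), ‖x (k + 1) - x k‖ ^ 2 / (2 * σ)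
      ≤ ∑ k ∈ Finset.Icc (1 : ℤ) (M : ℤ), ‖x k - x (k - 1)‖ ^ 2 / (2 * σ) := by
    have h := shift_sum_le (fun k => ‖x k - x (k - 1)‖ ^ 2 / (2 * σ))
      (fun k => by positivity) (M : ℤ)
    beta_reduce at h
    refine le_trans (le_of_eq (Finset.sum_congr rfl fun k _ => ?_)) h
    rw [show k + 1 - 1 = k by ring]
  have hsq0 : (0 : ℝ) ≤ Real.sqrt (τ * σ) * ‖K‖ :=
    mul_nonneg (Real.sqrt_nonneg _) (norm_nonneg _)
  have hb : -(∑ k ∈ Finset.Icc (1 : ℤ) ((M : ℤ) - 1),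
      ⟪K (x (k + 1)) - K (x k), y k - y (k - 1)⟫)
      ≤ Real.sqrt (τ * σ) * ‖K‖
          * (∑ k ∈ Finset.Icc (1 : ℤ) (M : ℤ), ‖x k - x (k - 1)‖ ^ 2 / (2 * σ))
        + Real.sqrt (τ * σ) * ‖K‖
          * (∑ k ∈ Finset.Icc (1 : ℤ) ((M : ℤ) - 1), ‖y k - y (k - 1)‖ ^ 2 / (2 * τ)) := by
    rw [← Finset.sum_neg_distrib]
    calc ∑ k ∈ Finset.Icc (1 : ℤ) ((M : ℤ) - 1),
          -⟪K (x (k + 1)) - K (x k), y k - y (k - 1)⟫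
        ≤ ∑ k ∈ Finset.Icc (1 : ℤ) ((M : ℤ) - 1),
            (Real.sqrt (τ * σ) * ‖K‖ * (‖x (k + 1) - x k‖ ^ 2 / (2 * σ))
              + Real.sqrt (τ * σ) * ‖K‖ * (‖y k - y (k - 1)‖ ^ 2 / (2 * τ))) :=
          Finset.sum_le_sum hXbnd
      _ = Real.sqrt (τ * σ) * ‖K‖
            * (∑ k ∈ Finset.Icc (1 : ℤ) ((M : ℤ) - 1), ‖x (k + 1) - x k‖ ^ 2 / (2 * σ))
          + Real.sqrt (τ * σ) * ‖K‖
            * (∑ k ∈ Finset.Icc (1 : ℤ) ((M : ℤ) - 1), ‖y k - y (k - 1)‖ ^ 2 / (2 * τ)) := by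
          rw [Finset.sum_add_distrib, Finset.mul_sum, Finset.mul_sum]
      _ ≤ _ := by
          apply add_le_add_left
          exact mul_le_mul_of_nonneg_left hshift hsq0
  -- (c) bound on the delayed-gradient error terms
  have hc : ∑ k ∈ Finset.Icc (0 : ℤ) ((M : ℤ) - 1),
      (∑ i, Lc i / 2 * ‖x (k + 1) - x (k - (dly k i : ℤ))‖ ^ 2)
      ≤ σ * (∑ i, Lc i) * ((T : ℝ) + 1) ^ 2
        * ∑ k ∈ Finset.Icc (1 : ℤ) (M : ℤ), ‖x k - x (k - 1)‖ ^ 2 / (2 * σ) := by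
    by_cases hLnn : ∀ i, 0 ≤ Lc i
    · have hLsum : 0 ≤ ∑ i, Lc i := Finset.sum_nonneg fun i _ => hLnn i
      have hb0 : ∀ m : ℤ, m ≤ 0 → ‖x m - x (m - 1)‖ ^ 2 = 0 := by
        intro m hm
        rw [hx0 m hm, hx0 (m - 1) (by omega), sub_self, norm_zero]
        norm_num
      have hEk : ∀ k ∈ Finset.Icc (0 : ℤ) ((M : ℤ) - 1),
          (∑ i, Lc i / 2 * ‖x (k + 1) - x (k - (dly k i : ℤ))‖ ^ 2)
          ≤ ((∑ i, Lc i) / 2) * (((T : ℝ) + 1)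
              * ∑ m ∈ Finset.Icc (k + 1 - (T : ℤ)) (k + 1), ‖x m - x (m - 1)‖ ^ 2) := by
        intro k _
        calc (∑ i, Lc i / 2 * ‖x (k + 1) - x (k - (dly k i : ℤ))‖ ^ 2)
            ≤ ∑ i : Fin N, Lc i / 2 * (((T : ℝ) + 1)
                * ∑ m ∈ Finset.Icc (k + 1 - (T : ℤ)) (k + 1), ‖x m - x (m - 1)‖ ^ 2) := by
              apply Finset.sum_le_sum
              intro i _
              exact mul_le_mul_of_nonneg_left (chain_bound x T k (dly k i) (hdly k i))
                (by linarith [hLnn i])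
          _ = ((∑ i, Lc i) / 2) * (((T : ℝ) + 1)
                * ∑ m ∈ Finset.Icc (k + 1 - (T : ℤ)) (k + 1), ‖x m - x (m - 1)‖ ^ 2) := by
              rw [← Finset.sum_mul, ← Finset.sum_div]
      have hre : ∑ k ∈ Finset.Icc (1 : ℤ) (M : ℤ),
          ∑ m ∈ Finset.Icc (k - (T : ℤ)) k, ‖x m - x (m - 1)‖ ^ 2
          = ∑ k ∈ Finset.Icc (0 : ℤ) ((M : ℤ) - 1),
              ∑ m ∈ Finset.Icc (k + 1 - (T : ℤ)) (k + 1), ‖x m - x (m - 1)‖ ^ 2 := by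
        have e : Finset.Icc (1 : ℤ) (M : ℤ)
            = Finset.map (addRightEmbedding 1) (Finset.Icc (0 : ℤ) ((M : ℤ) - 1)) := by
          rw [Finset.map_add_right_Icc]
          norm_num
        rw [e, Finset.sum_map]
        simp [addRightEmbedding]
      have hcount := count_bound (fun m => ‖x m - x (m - 1)‖ ^ 2) (fun m => by positivity)
        hb0 T (M : ℤ)
      rw [hre] at hcount
      calc ∑ k ∈ Finset.Icc (0 : ℤ) ((M : ℤ) - 1),
            (∑ i, Lc i / 2 * ‖x (k + 1) - x (k - (dly k i : ℤ))‖ ^ 2)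
          ≤ ∑ k ∈ Finset.Icc (0 : ℤ) ((M : ℤ) - 1), ((∑ i, Lc i) / 2) * (((T : ℝ) + 1)
              * ∑ m ∈ Finset.Icc (k + 1 - (T : ℤ)) (k + 1), ‖x m - x (m - 1)‖ ^ 2) :=
            Finset.sum_le_sum hEk
        _ = ((∑ i, Lc i) / 2) * (((T : ℝ) + 1)
              * ∑ k ∈ Finset.Icc (0 : ℤ) ((M : ℤ) - 1),
                ∑ m ∈ Finset.Icc (k + 1 - (T : ℤ)) (k + 1), ‖x m - x (m - 1)‖ ^ 2) := by
            rw [← Finset.mul_sum, ← Finset.mul_sum]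
        _ ≤ ((∑ i, Lc i) / 2) * (((T : ℝ) + 1)
              * (((T : ℝ) + 1) * ∑ m ∈ Finset.Icc (1 : ℤ) (M : ℤ), ‖x m - x (m - 1)‖ ^ 2)) := by
            apply mul_le_mul_of_nonneg_left _ (by positivity)
            exact mul_le_mul_of_nonneg_left hcount (by positivity)
        _ = σ * (∑ i, Lc i) * ((T : ℝ) + 1) ^ 2
              * ∑ k ∈ Finset.Icc (1 : ℤ) (M : ℤ), ‖x k - x (k - 1)‖ ^ 2 / (2 * σ) := by
            rw [← Finset.sum_div]
            field_simp
    · push_neg at hLnn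
      obtain ⟨i₀, hi₀⟩ := hLnn
      have hall : ∀ z w : EuclideanSpace ℝ (Fin d₁), z = w := by
        intro z w
        have h := (hsmooth i₀).2 z w
        have h0 : 0 ≤ Lc i₀ / 2 * ‖w - z‖ ^ 2 := le_trans (abs_nonneg _) h
        have hz : ‖w - z‖ ^ 2 ≤ 0 := by nlinarith
        have hnz : ‖w - z‖ = 0 := by nlinarith [norm_nonneg (w - z)]
        have := norm_eq_zero.mp hnz
        have := sub_eq_zero.mp this
        exact this.symm
      have hE0 : ∀ k ∈ Finset.Icc (0 : ℤ) ((M : ℤ) - 1),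
          (∑ i, Lc i / 2 * ‖x (k + 1) - x (k - (dly k i : ℤ))‖ ^ 2) = 0 := by
        intro k _
        apply Finset.sum_eq_zero
        intro i _
        rw [hall (x (k + 1)) (x (k - (dly k i : ℤ))), sub_self, norm_zero]
        norm_num
      have hdx0 : ∀ k ∈ Finset.Icc (1 : ℤ) (M : ℤ), ‖x k - x (k - 1)‖ ^ 2 / (2 * σ) = 0 := by
        intro k _
        rw [hall (x k) (x (k - 1)), sub_self, norm_zero]
        norm_num
      rw [Finset.sum_congr rfl hE0, Finset.sum_congr rfl hdx0]
      simp
  -- (d) split the y-telescope sum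
  have hd : ∑ k ∈ Finset.Icc (1 : ℤ) (M : ℤ), ‖y k - y (k - 1)‖ ^ 2 / (2 * τ)
      = (∑ k ∈ Finset.Icc (1 : ℤ) ((M : ℤ) - 1), ‖y k - y (k - 1)‖ ^ 2 / (2 * τ))
        + ‖y (M : ℤ) - y ((M : ℤ) - 1)‖ ^ 2 / (2 * τ) := by
    have h := Icc_sum_succ' 1 ((M : ℤ) - 1) (by omega)
      (fun k => ‖y k - y (k - 1)‖ ^ 2 / (2 * τ))
    rw [show (M : ℤ) - 1 + 1 = (M : ℤ) by ring] at h
    exact h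
  linarith [hstar_ineq, ha, hb, hc, hd]
end
end

section
/- Assume f = Σ_{i=1}^N f_i with each f_i : ℝ^{d₁} → ℝ convex and L_i-smooth (L = Σ L_i), h* : ℝ^{d₂} → (−∞,∞] proper closed convex, K a real d₂×d₁ matrix, and that the Lagrangian L(x,y) = f(x) + ⟨Kx,y⟩ − h*(y) has a saddle point (x̂, ŷ). Let {(x_k,y_k)} be generated by the extrapolated PD-PIAG iteration g_k = Σ_i ∇f_i(x_{k−τ_k^i}) (delays τ_k^i ∈ {0,…,T}), x_{k+1} = x_k − σ g_k − σ Kᵀ(2y_k − y_{k−1}), y_{k+1} = Prox_{τ h*}(y_k + τ K x_{k+1}), with step sizes satisfying √(τσ)‖K‖ + σL(T+1)² < 1. Then for every k ≥ 0, ‖x_k − x̂‖²/(2σ) + ‖y_k − ŷ‖²/(2τ) ≤ C (‖x_0 − x̂‖²/(2σ) + ‖y_0 − ŷ‖²/(2τ)) with C = (1 − τσ‖K‖²)^{−1}; in particular the sequence {(x_k, y_k)} is bounded. -/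
open scoped RealInnerProductSpace
open Filter Topology

noncomputable section

/- ### Auxiliary lemmas -/

lemma my_inner_sub_id {d : ℕ} (a b c : EuclideanSpace ℝ (Fin d)) :
    ⟪a - b, b - c⟫ = (‖a - c‖ ^ 2 - ‖a - b‖ ^ 2 - ‖b - c‖ ^ 2) / 2 := by
  have h := norm_add_sq_real (a - b) (b - c)
  have e : (a - b) + (b - c) = a - c := by abel
  rw [e] at h
  linarith

lemma my_conv_grad {d : ℕ} {g : EuclideanSpace ℝ (Fin d) → ℝ}
    (hc : ConvexOn ℝ Set.univ g) (hd : Differentiable ℝ g)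
    (a b : EuclideanSpace ℝ (Fin d)) :
    ⟪gradient g a, b - a⟫ ≤ g b - g a := by
  set v := b - a with hv
  have hga : HasGradientAt g (gradient g a) a := (hd a).hasGradientAt
  have hfd := hga.hasFDerivAt
  have hline : HasDerivAt (fun t : ℝ => a + t • v) v 0 := by
    have h1 : HasDerivAt (fun t : ℝ => t) 1 0 := hasDerivAt_id 0
    have h2 := h1.smul_const v
    have h3 := h2.const_add a
    simpa using h3
  have hψ : HasDerivAt (fun t : ℝ => g (a + t • v)) (⟪gradient g a, v⟫) 0 := by
    have hfd' : HasFDerivAt g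
        ((InnerProductSpace.toDual ℝ (EuclideanSpace ℝ (Fin d))) (gradient g a))
        (a + (0:ℝ) • v) := by simpa using hfd
    have := hfd'.comp_hasDerivAt 0 hline
    simpa [InnerProductSpace.toDual_apply_apply, Function.comp_def] using this
  have htend : Tendsto (slope (fun t : ℝ => g (a + t • v)) 0) (𝓝[>] (0:ℝ))
      (𝓝 (⟪gradient g a, v⟫)) := by
    have := hasDerivAt_iff_tendsto_slope.1 hψ
    exact this.mono_left (nhdsWithin_mono _ (fun t ht => ne_of_gt ht))
  refine le_of_tendsto htend ?_
  filter_upwards [Ioc_mem_nhdsGT_of_mem (Set.mem_Ico.2 ⟨le_refl (0:ℝ), zero_lt_one⟩)]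
    with t ht
  obtain ⟨ht0, ht1⟩ := ht
  have hmem : a + t • v = (1 - t) • a + t • b := by
    rw [hv]; module
  have hcv := hc.2 (Set.mem_univ a) (Set.mem_univ b)
    (by linarith : (0:ℝ) ≤ 1 - t) ht0.le (by ring)
  rw [← hmem] at hcv
  rw [slope_def_field, div_le_iff₀ (by simpa using ht0)]
  simp only [zero_smul, add_zero, smul_eq_mul] at hcv ⊢
  nlinarith

lemma my_prox_vi {d : ℕ} {g : EuclideanSpace ℝ (Fin d) → EReal}
    {z p u : EuclideanSpace ℝ (Fin d)} {gp gu : ℝ}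
    (hp : IsProxPt g z p) (hgp : g p = (gp : EReal)) (_hgu : g u = (gu : EReal))
    (hcvx : ∀ t : ℝ, 0 < t → t ≤ 1 →
      g ((1 - t) • p + t • u) ≤ (((1 - t) * gp + t * gu : ℝ) : EReal)) :
    gp ≤ gu + ⟪p - z, u - p⟫ := by
  have key : ∀ t : ℝ, 0 < t → t ≤ 1 →
      gp ≤ gu + ⟪p - z, u - p⟫ + t * (‖u - p‖ ^ 2 / 2) := by
    intro t ht0 ht1
    set ut := (1 - t) • p + t • u with hut
    have h1 := hp ut
    rw [hgp] at h1
    have h2 := hcvx t ht0 ht1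
    have h3 : ((gp + ‖p - z‖ ^ 2 / 2 : ℝ) : EReal)
        ≤ (((1 - t) * gp + t * gu + ‖ut - z‖ ^ 2 / 2 : ℝ) : EReal) := by
      push_cast
      calc ((gp : EReal) + (‖p - z‖ ^ 2 / 2 : ℝ)) ≤ g ut + ((‖ut - z‖ ^ 2 / 2 : ℝ) : EReal) := h1
      _ ≤ (((1 - t) * gp + t * gu : ℝ) : EReal) + ((‖ut - z‖ ^ 2 / 2 : ℝ) : EReal) := by
          exact add_le_add_left h2 _
      _ = _ := by push_cast; ring_nf
    rw [EReal.coe_le_coe_iff] at h3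
    have hexp : ut - z = (p - z) + t • (u - p) := by rw [hut]; module
    have hnorm : ‖ut - z‖ ^ 2
        = ‖p - z‖ ^ 2 + 2 * (t * ⟪p - z, u - p⟫) + t ^ 2 * ‖u - p‖ ^ 2 := by
      rw [hexp, norm_add_sq_real, real_inner_smul_right, norm_smul]
      simp [abs_of_pos ht0]
      ring
    rw [hnorm] at h3
    nlinarith [sq_nonneg t]
  have hc : (0:ℝ) ≤ ‖u - p‖ ^ 2 / 2 := by positivity
  refine le_of_forall_pos_le_add ?_
  intro ε hε
  set c := ‖u - p‖ ^ 2 / 2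
  set t := min 1 (ε / (c + 1)) with htdef
  have ht0 : 0 < t := lt_min zero_lt_one (by positivity)
  have ht1 : t ≤ 1 := min_le_left _ _
  have htc : t * c ≤ ε := by
    have h1 : t ≤ ε / (c + 1) := min_le_right _ _
    have h2 : t * c ≤ (ε / (c + 1)) * c := by
      apply mul_le_mul_of_nonneg_right h1 hc
    have h3 : (ε / (c + 1)) * c ≤ ε := by
      rw [div_mul_eq_mul_div, div_le_iff₀ (by positivity)]
      nlinarith
    linarith
  have := key t ht0 ht1
  linarith

lemma my_young1 {c s t a b : ℝ} (hc : 0 ≤ c) (hs : 0 < s) (ht : 0 < t) :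
    c * a * b ≤ c * s * t * (a ^ 2 / (2 * s ^ 2)) + c * s * t * (b ^ 2 / (2 * t ^ 2)) := by
  have key : 0 ≤ (t * a - s * b) ^ 2 := sq_nonneg _
  have e : c * s * t * (a ^ 2 / (2 * s ^ 2)) + c * s * t * (b ^ 2 / (2 * t ^ 2)) - c * a * b
      = c / (2 * s * t) * ((t * a - s * b) ^ 2) := by
    field_simp
    ring
  nlinarith [mul_nonneg (div_nonneg hc (by positivity : (0:ℝ) ≤ 2 * s * t)) key]

lemma my_young2 {kk τ a b : ℝ} (_hk : 0 ≤ kk) (hτ : 0 < τ) :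
    kk * a * b ≤ τ * kk ^ 2 * a ^ 2 / 2 + b ^ 2 / (2 * τ) := by
  have key : 0 ≤ (τ * kk * a - b) ^ 2 := sq_nonneg _
  have e : τ * kk ^ 2 * a ^ 2 / 2 + b ^ 2 / (2 * τ) - kk * a * b
      = ((τ * kk * a - b) ^ 2) / (2 * τ) := by
    field_simp
    ring
  nlinarith [div_nonneg key (by positivity : (0:ℝ) ≤ 2 * τ)]

lemma my_inner_op_le {d₁ d₂ : ℕ} (K : EuclideanSpace ℝ (Fin d₁) →L[ℝ] EuclideanSpace ℝ (Fin d₂))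
    (v : EuclideanSpace ℝ (Fin d₁)) (w : EuclideanSpace ℝ (Fin d₂)) :
    ⟪K v, w⟫ ≤ ‖K‖ * ‖v‖ * ‖w‖ := by
  calc ⟪K v, w⟫ ≤ ‖K v‖ * ‖w‖ := real_inner_le_norm _ _
  _ ≤ ‖K‖ * ‖v‖ * ‖w‖ :=
      mul_le_mul_of_nonneg_right (K.le_opNorm v) (norm_nonneg _)

lemma my_abs_inner_op_le {d₁ d₂ : ℕ} (K : EuclideanSpace ℝ (Fin d₁) →L[ℝ] EuclideanSpace ℝ (Fin d₂))
    (v : EuclideanSpace ℝ (Fin d₁)) (w : EuclideanSpace ℝ (Fin d₂)) :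
    |⟪K v, w⟫| ≤ ‖K‖ * ‖v‖ * ‖w‖ := by
  calc |⟪K v, w⟫| ≤ ‖K v‖ * ‖w‖ := abs_real_inner_le_norm _ _
  _ ≤ ‖K‖ * ‖v‖ * ‖w‖ :=
      mul_le_mul_of_nonneg_right (K.le_opNorm v) (norm_nonneg _)

lemma my_tel {d : ℕ} (x : ℤ → EuclideanSpace ℝ (Fin d)) :
    ∀ (c : ℕ) (k : ℤ), x (k + 1) - x (k - (c : ℤ))
      = ∑ j ∈ Finset.range (c + 1), (x (k - (j : ℤ) + 1) - x (k - (j : ℤ))) := by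
  intro c
  induction c with
  | zero => intro k; simp
  | succ c ih =>
    intro k
    rw [Finset.sum_range_succ, ← ih k]
    have e1 : k - ((c : ℤ) + 1) + 1 = k - (c : ℤ) := by ring
    push_cast
    rw [e1]
    abel

lemma my_cs {d : ℕ} (v : ℕ → EuclideanSpace ℝ (Fin d)) (n : ℕ) :
    ‖∑ j ∈ Finset.range n, v j‖ ^ 2 ≤ (n : ℝ) * ∑ j ∈ Finset.range n, ‖v j‖ ^ 2 := by
  have h1 : ‖∑ j ∈ Finset.range n, v j‖ ≤ ∑ j ∈ Finset.range n, ‖v j‖ :=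
    norm_sum_le _ _
  have h2 : ‖∑ j ∈ Finset.range n, v j‖ ^ 2 ≤ (∑ j ∈ Finset.range n, ‖v j‖) ^ 2 := by
    apply pow_le_pow_left₀ (norm_nonneg _) h1
  have h3 : (∑ j ∈ Finset.range n, ‖v j‖) ^ 2
      ≤ (Finset.range n).card * ∑ j ∈ Finset.range n, ‖v j‖ ^ 2 :=
    sq_sum_le_card_mul_sum_sq
  simpa [Finset.card_range] using h2.trans h3

lemma my_cast_sum (F : ℤ → ℝ) : ∀ n : ℕ,
    ∑ k ∈ Finset.range n, F (k : ℤ) = ∑ m ∈ Finset.Ico (0:ℤ) (n:ℤ), F m := by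
  intro n
  induction n with
  | zero => simp
  | succ n ih =>
    rw [Finset.sum_range_succ, ih]
    have e : Finset.Ico (0:ℤ) ((n+1 : ℕ):ℤ) = insert (n:ℤ) (Finset.Ico (0:ℤ) (n:ℤ)) := by
      ext m
      simp only [Finset.mem_Ico, Finset.mem_insert]
      omega
    rw [e, Finset.sum_insert (by simp [Finset.mem_Ico])]
    ring

lemma my_shift (F : ℤ → ℝ) (hF0 : ∀ m : ℤ, m < 0 → F m = 0)
    (hFnn : ∀ m : ℤ, 0 ≤ F m) (j : ℤ) (hj : 0 ≤ j) (n : ℕ) :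
    ∑ k ∈ Finset.range n, F ((k : ℤ) - j) ≤ ∑ k ∈ Finset.range n, F (k : ℤ) := by
  rw [my_cast_sum (fun m => F (m - j)) n, my_cast_sum F n]
  have hmap : ∑ m ∈ Finset.Ico (-j) ((n:ℤ) - j), F m
      = ∑ m ∈ Finset.Ico (0:ℤ) (n:ℤ), F (m - j) := by
    have e : Finset.Ico (-j) ((n:ℤ) - j) = (Finset.Ico (0:ℤ) (n:ℤ)).map
        (addRightEmbedding (-j)) := by
      rw [Finset.map_add_right_Ico]
      congr 1 <;> ring
    rw [e, Finset.sum_map]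
    apply Finset.sum_congr rfl
    intro m _
    congr 1
  rw [← hmap]
  calc ∑ m ∈ Finset.Ico (-j) ((n:ℤ) - j), F m
      ≤ ∑ m ∈ Finset.Ico (-j) (n:ℤ), F m := by
        apply Finset.sum_le_sum_of_subset_of_nonneg
        · exact Finset.Ico_subset_Ico le_rfl (by linarith)
        · intro m _ _; exact hFnn m
    _ = ∑ m ∈ Finset.Ico (-j) (0:ℤ), F m + ∑ m ∈ Finset.Ico (0:ℤ) (n:ℤ), F m := by
        rw [← Finset.Ico_union_Ico_eq_Ico (show -j ≤ (0:ℤ) by linarith)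
            (show (0:ℤ) ≤ (n:ℤ) by positivity),
          Finset.sum_union (Finset.Ico_disjoint_Ico_consecutive _ _ _)]
    _ = ∑ m ∈ Finset.Ico (0:ℤ) (n:ℤ), F m := by
        have h0 : ∑ m ∈ Finset.Ico (-j) (0:ℤ), F m = 0 := by
          apply Finset.sum_eq_zero
          intro m hm
          exact hF0 m (Finset.mem_Ico.1 hm).2
        rw [h0, zero_add]

set_option maxHeartbeats 1600000 in
/-- Theorem 1 (i): boundedness of the extrapolated PD-PIAG iterates. -/
theorem stmt_6
    (d₁ d₂ N T : ℕ)
    (f : Fin N → EuclideanSpace ℝ (Fin d₁) → ℝ) (Lc : Fin N → ℝ)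
    (hconv : ∀ i, ConvexOn ℝ Set.univ (f i))
    (hsmooth : ∀ i, LSmooth (f i) (Lc i))
    (hstar : EuclideanSpace ℝ (Fin d₂) → EReal)
    (hproper : EProper hstar) (hlsc : LowerSemicontinuous hstar) (hconvh : EConvexFn hstar)
    (K : EuclideanSpace ℝ (Fin d₁) →L[ℝ] EuclideanSpace ℝ (Fin d₂))
    (σ τ : ℝ) (hσ : 0 < σ) (hτ : 0 < τ)
    (x : ℤ → EuclideanSpace ℝ (Fin d₁)) (y : ℤ → EuclideanSpace ℝ (Fin d₂))
    (hx0 : ∀ k : ℤ, k ≤ 0 → x k = x 0) (hy0 : ∀ k : ℤ, k ≤ 0 → y k = y 0)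
    (dly : ℤ → Fin N → ℕ) (hdly : ∀ (k : ℤ) (i : Fin N), dly k i ≤ T)
    (hxiter : ∀ k : ℤ, 0 ≤ k →
      x (k + 1) = x k - σ • (∑ i, gradient (f i) (x (k - (dly k i : ℤ))))
        - σ • (ContinuousLinearMap.adjoint K) ((2 : ℝ) • y k - y (k - 1)))
    (hyiter : ∀ k : ℤ, 0 ≤ k →
      IsProxPt (fun u => (τ : EReal) * hstar u) (y k + τ • K (x (k + 1))) (y (k + 1)))
    (xh : EuclideanSpace ℝ (Fin d₁)) (yh : EuclideanSpace ℝ (Fin d₂))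
    (hsaddle : IsSaddlePt (Lagr (fun z => ∑ i, f i z) hstar K) xh yh)
    (hstep : Real.sqrt (τ * σ) * ‖K‖ + σ * (∑ i, Lc i) * ((T : ℝ) + 1) ^ 2 < 1)
 :
    ∀ k : ℤ, 0 ≤ k →
      ‖x k - xh‖ ^ 2 / (2 * σ) + ‖y k - yh‖ ^ 2 / (2 * τ)
        ≤ (1 - τ * σ * ‖K‖ ^ 2)⁻¹
          * (‖x 0 - xh‖ ^ 2 / (2 * σ) + ‖y 0 - yh‖ ^ 2 / (2 * τ)) := by
  classical
  obtain ⟨⟨y₀, hy₀⟩, hprop2⟩ := hproper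
  set r₀ : ℝ := (hstar y₀).toReal with hr₀
  have hy₀r : hstar y₀ = (r₀ : EReal) := (EReal.coe_toReal hy₀ (hprop2 y₀)).symm
  -- Lagrangian in real terms
  have lagr_eq : ∀ (a : EuclideanSpace ℝ (Fin d₁)) (b : EuclideanSpace ℝ (Fin d₂)) (r : ℝ),
      hstar b = (r : EReal) →
      Lagr (fun z => ∑ i, f i z) hstar K a b
        = (((∑ i, f i a) + ⟪K a, b⟫ - r : ℝ) : EReal) := by
    intro a b r hr
    unfold Lagr
    rw [hr]
    norm_cast
  -- yh is finite for hstar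
  have hyh_ne_top : hstar yh ≠ ⊤ := by
    intro htop
    have h1 := (hsaddle xh y₀).1
    rw [lagr_eq xh y₀ r₀ hy₀r] at h1
    have h2 : Lagr (fun z => ∑ i, f i z) hstar K xh yh = ⊥ := by
      unfold Lagr
      rw [htop, sub_eq_add_neg, EReal.neg_top, EReal.add_bot]
    rw [h2, le_bot_iff] at h1
    exact EReal.coe_ne_bot _ h1
  set Hh : ℝ := (hstar yh).toReal with hHh
  have hyh_r : hstar yh = (Hh : EReal) := (EReal.coe_toReal hyh_ne_top (hprop2 yh)).symm
  have hS1 : ∀ (y' : EuclideanSpace ℝ (Fin d₂)) (r' : ℝ), hstar y' = (r' : EReal) →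
      ⟪K xh, y'⟫ - r' ≤ ⟪K xh, yh⟫ - Hh := by
    intro y' r' hr'
    have h1 := (hsaddle xh y').1
    rw [lagr_eq xh y' r' hr', lagr_eq xh yh Hh hyh_r, EReal.coe_le_coe_iff] at h1
    linarith
  have hS2 : ∀ x', (∑ i, f i xh) + ⟪K xh, yh⟫ ≤ (∑ i, f i x') + ⟪K x', yh⟫ := by
    intro x'
    have h1 := (hsaddle x' yh).2
    rw [lagr_eq xh yh Hh hyh_r, lagr_eq x' yh Hh hyh_r, EReal.coe_le_coe_iff] at h1
    linarith
  -- constants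
  set β : ℝ := Real.sqrt (τ * σ) * ‖K‖ with hβ
  have hβ0 : 0 ≤ β := mul_nonneg (Real.sqrt_nonneg _) (norm_nonneg _)
  have hβsq : β ^ 2 = τ * σ * ‖K‖ ^ 2 := by
    rw [hβ, mul_pow, Real.sq_sqrt (by positivity)]
  set LT : ℝ := ∑ i, Lc i with hLT
  -- sequences
  set A : ℤ → ℝ := fun m => ‖x m - xh‖ ^ 2 / (2 * σ) with hA
  set B : ℤ → ℝ := fun m => ‖y m - yh‖ ^ 2 / (2 * τ) with hB
  set S : ℤ → ℝ := fun m => ⟪K (x m - xh), y (m - 1) - y m⟫ with hS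
  set Q : ℤ → ℝ := fun m => ‖y m - y (m - 1)‖ ^ 2 / (2 * τ) with hQ
  set E : ℤ → ℝ := fun k => ∑ i, Lc i / 2 * ‖x (k + 1) - x (k - (dly k i : ℤ))‖ ^ 2 with hE
  set nd : ℤ → ℝ := fun m => ‖x (m + 1) - x m‖ ^ 2 with hnd
  have hndnn : ∀ m : ℤ, 0 ≤ nd m := by intro m; rw [hnd]; positivity
  have hAnn : ∀ m : ℤ, 0 ≤ A m := by intro m; rw [hA]; positivity
  have hBnn : ∀ m : ℤ, 0 ≤ B m := by intro m; rw [hB]; positivity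
  have hQnn : ∀ m : ℤ, 0 ≤ Q m := by intro m; rw [hQ]; positivity
  have hnd0 : ∀ m : ℤ, m < 0 → nd m = 0 := by
    intro m hm
    rw [hnd]
    simp only
    rw [hx0 (m + 1) (by omega), hx0 m (by omega), sub_self]
    simp
  have hym1 : y (0 - 1 : ℤ) = y 0 := hy0 (0 - 1) (by omega)
  have hS0 : S (0 : ℤ) = 0 := by
    rw [hS]
    simp only
    rw [hym1, sub_self, inner_zero_right]
  have hQ0 : Q (0 : ℤ) = 0 := by
    rw [hQ]
    simp only
    rw [hym1, sub_self]
    simp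
  -- case-split facts
  obtain ⟨hβ1, hEsum⟩ : β < 1 ∧ ∀ n : ℕ,
      ∑ k ∈ Finset.range n, E (k : ℤ)
        ≤ LT * ((T : ℝ) + 1) ^ 2 / 2 * ∑ k ∈ Finset.range n, nd (k : ℤ) := by
    rcases subsingleton_or_nontrivial (EuclideanSpace ℝ (Fin d₁)) with hss | hnt
    · have hx_eq : ∀ a b : EuclideanSpace ℝ (Fin d₁), a = b := fun a b => Subsingleton.elim a b
      have hK0 : ‖K‖ = 0 := by
        have hKz : K = 0 := by
          ext v
          rw [hx_eq v 0, map_zero]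
          rfl
        rw [hKz, norm_zero]
      constructor
      · rw [hβ, hK0, mul_zero]; norm_num
      · intro n
        have hE0 : ∀ k : ℤ, E k = 0 := by
          intro k
          rw [hE]
          apply Finset.sum_eq_zero
          intro i _
          rw [hx_eq (x (k + 1)) (x (k - (dly k i : ℤ))), sub_self]
          simp
        have hnd0' : ∀ k : ℤ, nd k = 0 := by
          intro k
          rw [hnd]
          simp only
          rw [hx_eq (x (k + 1)) (x k), sub_self]
          simp
        simp [hE0, hnd0']
    · have hLi : ∀ i, 0 ≤ Lc i := by
        intro i
        obtain ⟨v, hv⟩ := exists_ne (0 : EuclideanSpace ℝ (Fin d₁))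
        have hb := (hsmooth i).2 0 v
        have habs : (0:ℝ) ≤ |f i v - f i 0 - ⟪gradient (f i) 0, v - 0⟫| := abs_nonneg _
        have hvp : 0 < ‖v - 0‖ ^ 2 := by
          rw [sub_zero]
          have : 0 < ‖v‖ := norm_pos_iff.2 hv
          positivity
        nlinarith
      have hLTnn : 0 ≤ LT := by rw [hLT]; exact Finset.sum_nonneg fun i _ => hLi i
      have hβ1 : β < 1 := by
        nlinarith [hstep, mul_nonneg (mul_nonneg hσ.le hLTnn) (sq_nonneg ((T:ℝ) + 1))]
      refine ⟨hβ1, fun n => ?_⟩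
      have hEk : ∀ k : ℤ, E k
          ≤ LT * ((T : ℝ) + 1) / 2 * ∑ j ∈ Finset.range (T + 1), nd (k - (j : ℤ)) := by
        intro k
        have hndsum_nn : 0 ≤ ∑ j ∈ Finset.range (T + 1), nd (k - (j : ℤ)) :=
          Finset.sum_nonneg fun j _ => hndnn _
        have hterm : ∀ i : Fin N, ‖x (k + 1) - x (k - (dly k i : ℤ))‖ ^ 2
            ≤ ((T : ℝ) + 1) * ∑ j ∈ Finset.range (T + 1), nd (k - (j : ℤ)) := by
          intro i
          have htel := my_tel x (dly k i) k
          have hcs := my_cs (fun j => x (k - (j : ℤ) + 1) - x (k - (j : ℤ))) (dly k i + 1)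
          rw [← htel] at hcs
          have h1 : ∑ j ∈ Finset.range (dly k i + 1),
              ‖x (k - (j : ℤ) + 1) - x (k - (j : ℤ))‖ ^ 2
              = ∑ j ∈ Finset.range (dly k i + 1), nd (k - (j : ℤ)) := by
            apply Finset.sum_congr rfl
            intro j _
            rw [hnd]
          have h2 : ∑ j ∈ Finset.range (dly k i + 1), nd (k - (j : ℤ))
              ≤ ∑ j ∈ Finset.range (T + 1), nd (k - (j : ℤ)) :=
            Finset.sum_le_sum_of_subset_of_nonneg
              (Finset.range_subset_range.2 (by have := hdly k i; omega))
              (fun j _ _ => hndnn _)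
          have h3 : ((dly k i + 1 : ℕ) : ℝ) ≤ ((T : ℝ) + 1) := by
            have h := (Nat.cast_le (α := ℝ)).2 (hdly k i)
            push_cast
            linarith
          calc ‖x (k + 1) - x (k - (dly k i : ℤ))‖ ^ 2
              ≤ ((dly k i + 1 : ℕ) : ℝ) * ∑ j ∈ Finset.range (dly k i + 1),
                ‖x (k - (j : ℤ) + 1) - x (k - (j : ℤ))‖ ^ 2 := hcs
            _ = ((dly k i + 1 : ℕ) : ℝ) * ∑ j ∈ Finset.range (dly k i + 1), nd (k - (j : ℤ)) := by
                rw [h1]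
            _ ≤ ((T : ℝ) + 1) * ∑ j ∈ Finset.range (T + 1), nd (k - (j : ℤ)) := by
                apply mul_le_mul h3 h2 (Finset.sum_nonneg fun j _ => hndnn _) (by positivity)
        calc E k = ∑ i, Lc i / 2 * ‖x (k + 1) - x (k - (dly k i : ℤ))‖ ^ 2 := by rw [hE]
          _ ≤ ∑ i, Lc i / 2 * (((T : ℝ) + 1) * ∑ j ∈ Finset.range (T + 1), nd (k - (j : ℤ))) := by
              apply Finset.sum_le_sum
              intro i _
              exact mul_le_mul_of_nonneg_left (hterm i) (by have := hLi i; linarith)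
          _ = LT * ((T : ℝ) + 1) / 2 * ∑ j ∈ Finset.range (T + 1), nd (k - (j : ℤ)) := by
              rw [← Finset.sum_mul, ← Finset.sum_div, hLT]
              ring
      calc ∑ k ∈ Finset.range n, E (k : ℤ)
          ≤ ∑ k ∈ Finset.range n, (LT * ((T : ℝ) + 1) / 2
              * ∑ j ∈ Finset.range (T + 1), nd ((k : ℤ) - (j : ℤ))) :=
            Finset.sum_le_sum fun k _ => hEk (k : ℤ)
        _ = LT * ((T : ℝ) + 1) / 2
              * ∑ k ∈ Finset.range n, ∑ j ∈ Finset.range (T + 1), nd ((k : ℤ) - (j : ℤ)) := by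
            rw [Finset.mul_sum]
        _ ≤ LT * ((T : ℝ) + 1) / 2 * (((T : ℝ) + 1) * ∑ k ∈ Finset.range n, nd (k : ℤ)) := by
            apply mul_le_mul_of_nonneg_left _ (by positivity)
            rw [Finset.sum_comm]
            calc ∑ j ∈ Finset.range (T + 1), ∑ k ∈ Finset.range n, nd ((k : ℤ) - (j : ℤ))
                ≤ ∑ j ∈ Finset.range (T + 1), ∑ k ∈ Finset.range n, nd (k : ℤ) :=
                  Finset.sum_le_sum fun j _ => my_shift nd hnd0 hndnn (j : ℤ) (by positivity) n
              _ = ((T : ℝ) + 1) * ∑ k ∈ Finset.range n, nd (k : ℤ) := by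
                  rw [Finset.sum_const, Finset.card_range, nsmul_eq_mul]
                  push_cast
                  ring
        _ = LT * ((T : ℝ) + 1) ^ 2 / 2 * ∑ k ∈ Finset.range n, nd (k : ℤ) := by ring
  -- the per-step estimate
  have hkey : ∀ m : ℤ, 0 ≤ m →
      A (m + 1) + B (m + 1) + S (m + 1) + nd m / (2 * σ) + Q (m + 1)
        ≤ A m + B m + S m + β * (nd m / (2 * σ)) + β * Q m + E m := by
    intro m hm
    -- abbreviations
    have hxe := hxiter m hm
    set xk := x m with hxk
    set p1 := x (m + 1) with hp1
    set yk := y m with hyk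
    set ym := y (m - 1) with hymm
    set yp := y (m + 1) with hyp
    set G := ∑ i, gradient (f i) (x (m - (dly m i : ℤ))) with hG
    set yb := (2 : ℝ) • yk - ym with hyb
    -- primal identity
    have h1 : xk - p1 = σ • (G + (ContinuousLinearMap.adjoint K) yb) := by
      rw [hxe]
      module
    have hinner1 : ⟪G, p1 - xh⟫ + ⟪yb, K (p1 - xh)⟫
        = (‖xk - xh‖ ^ 2 - ‖xk - p1‖ ^ 2 - ‖p1 - xh‖ ^ 2) / (2 * σ) := by
      have h2 : ⟪xk - p1, p1 - xh⟫
          = (‖xk - xh‖ ^ 2 - ‖xk - p1‖ ^ 2 - ‖p1 - xh‖ ^ 2) / 2 :=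
        my_inner_sub_id xk p1 xh
      have h4 : ⟪xk - p1, p1 - xh⟫
          = σ * ⟪G + (ContinuousLinearMap.adjoint K) yb, p1 - xh⟫ := by
        rw [h1, real_inner_smul_left]
      have h3 : ⟪G + (ContinuousLinearMap.adjoint K) yb, p1 - xh⟫
          = ⟪G, p1 - xh⟫ + ⟪yb, K (p1 - xh)⟫ := by
        rw [inner_add_left, ContinuousLinearMap.adjoint_inner_left]
      rw [h4, h3] at h2
      rw [eq_div_iff (by positivity : (0:ℝ) < 2 * σ).ne']
      rw [eq_div_iff (by norm_num : (2:ℝ) ≠ 0)] at h2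
      linarith [h2]
    -- convexity and smoothness per component
    have hfi : ∀ i : Fin N, f i p1 - f i xh
        ≤ ⟪gradient (f i) (x (m - (dly m i : ℤ))), p1 - xh⟫
          + Lc i / 2 * ‖p1 - x (m - (dly m i : ℤ))‖ ^ 2 := by
      intro i
      set w := x (m - (dly m i : ℤ)) with hwdef
      have hcg := my_conv_grad (hconv i) ((hsmooth i).1) w xh
      have hsm := (hsmooth i).2 w p1
      have hsm' : f i p1 - f i w - ⟪gradient (f i) w, p1 - w⟫
          ≤ Lc i / 2 * ‖p1 - w‖ ^ 2 := (abs_le.1 hsm).2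
      have hsplit : ⟪gradient (f i) w, p1 - w⟫ - ⟪gradient (f i) w, xh - w⟫
          = ⟪gradient (f i) w, p1 - xh⟫ := by
        rw [← inner_sub_right]
        congr 1
        abel
      linarith
    have hfsum : (∑ i, f i p1) - (∑ i, f i xh) ≤ ⟪G, p1 - xh⟫ + E m := by
      have h4 := Finset.sum_le_sum (fun i (_ : i ∈ Finset.univ) => hfi i)
      rw [Finset.sum_add_distrib, Finset.sum_sub_distrib] at h4
      have h5 : ∑ i, ⟪gradient (f i) (x (m - (dly m i : ℤ))), p1 - xh⟫
          = ⟪G, p1 - xh⟫ := by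
        rw [hG, sum_inner]
      have h6 : E m = ∑ i, Lc i / 2 * ‖p1 - x (m - (dly m i : ℤ))‖ ^ 2 := by
        rw [hE]
      rw [h5] at h4
      rw [h6]
      linarith
    have hP' : ⟪K (p1 - xh), yb - yh⟫ ≤ A m - A (m + 1) - nd m / (2 * σ) + E m := by
      have h5 := hS2 p1
      have h6 : ⟪K p1, yh⟫ - ⟪K xh, yh⟫ = ⟪K (p1 - xh), yh⟫ := by
        rw [map_sub, inner_sub_left]
      have h7 : ⟪K (p1 - xh), yb - yh⟫
          = ⟪yb, K (p1 - xh)⟫ - ⟪K (p1 - xh), yh⟫ := by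
        rw [inner_sub_right, real_inner_comm (K (p1 - xh)) yb]
      have hAe : A m - A (m + 1) - nd m / (2 * σ)
          = (‖xk - xh‖ ^ 2 - ‖xk - p1‖ ^ 2 - ‖p1 - xh‖ ^ 2) / (2 * σ) := by
        rw [show A m = ‖xk - xh‖ ^ 2 / (2 * σ) from rfl,
          show A (m + 1) = ‖p1 - xh‖ ^ 2 / (2 * σ) from rfl,
          show nd m = ‖p1 - xk‖ ^ 2 from rfl, norm_sub_rev xk p1]
        ring
      rw [h7, hAe]
      linarith [hinner1, hfsum, h5, h6]
    -- dual step
    have hprox := hyiter m hm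
    have hgy₀ : (fun u => (τ : EReal) * hstar u) y₀ = ((τ * r₀ : ℝ) : EReal) := by
      simp only
      rw [hy₀r]
      norm_cast
    have hgp_ne_top : (τ : EReal) * hstar yp ≠ ⊤ := by
      intro htop
      have h8 := hprox y₀
      simp only at h8
      rw [hy₀r] at h8
      rw [show ((τ : EReal) * hstar (y (m+1))) = ⊤ from htop] at h8
      rw [EReal.top_add_coe] at h8
      have : ((τ * r₀ : ℝ) : EReal) + ((‖y₀ - (yk + τ • K p1)‖ ^ 2 / 2 : ℝ) : EReal)
          = ((τ * r₀ + ‖y₀ - (yk + τ • K p1)‖ ^ 2 / 2 : ℝ) : EReal) := by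
        norm_cast
      rw [show ((τ : EReal) * ((r₀ : ℝ) : EReal)) = ((τ * r₀ : ℝ) : EReal) by norm_cast,
        this, top_le_iff] at h8
      exact EReal.coe_ne_top _ h8
    have hyp_ne_top : hstar yp ≠ ⊤ := by
      intro h
      apply hgp_ne_top
      rw [h]
      exact EReal.coe_mul_top_of_pos hτ
    set hpv : ℝ := (hstar yp).toReal with hhpv
    have hyp_r : hstar yp = (hpv : EReal) := (EReal.coe_toReal hyp_ne_top (hprop2 yp)).symm
    have hgyp : (fun u => (τ : EReal) * hstar u) yp = ((τ * hpv : ℝ) : EReal) := by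
      simp only
      rw [hyp_r]
      norm_cast
    have hgyh : (fun u => (τ : EReal) * hstar u) yh = ((τ * Hh : ℝ) : EReal) := by
      simp only
      rw [hyh_r]
      norm_cast
    have hcvx : ∀ t : ℝ, 0 < t → t ≤ 1 →
        (fun u => (τ : EReal) * hstar u) ((1 - t) • yp + t • yh)
          ≤ (((1 - t) * (τ * hpv) + t * (τ * Hh) : ℝ) : EReal) := by
      intro t ht0 ht1
      have hcc := hconvh yp yh (1 - t) t (by linarith) ht0.le (by ring)
      rw [hyp_r, hyh_r] at hcc
      have hcc' : hstar ((1 - t) • yp + t • yh) ≤ (((1 - t) * hpv + t * Hh : ℝ) : EReal) := by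
        refine hcc.trans_eq ?_
        norm_cast
      set ut := (1 - t) • yp + t • yh with hutd
      have hut_ne_top : hstar ut ≠ ⊤ := by
        intro h
        rw [h] at hcc'
        exact EReal.coe_ne_top _ (top_le_iff.1 hcc')
      have hut_r : hstar ut = (((hstar ut).toReal : ℝ) : EReal) :=
        (EReal.coe_toReal hut_ne_top (hprop2 ut)).symm
      have hrle : (hstar ut).toReal ≤ (1 - t) * hpv + t * Hh := by
        rw [hut_r] at hcc'
        exact EReal.coe_le_coe_iff.1 hcc'
      simp only
      rw [hut_r]
      rw [show ((τ : EReal) * (((hstar ut).toReal : ℝ) : EReal))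
          = ((τ * (hstar ut).toReal : ℝ) : EReal) by norm_cast]
      rw [EReal.coe_le_coe_iff]
      nlinarith [hτ]
    have hvi := my_prox_vi hprox hgyp hgyh hcvx
    -- hvi : τ * hpv ≤ τ * Hh + ⟪yp - (yk + τ • K p1), yh - yp⟫
    have hsplit2 : ⟪yp - (yk + τ • K p1), yh - yp⟫
        = ⟪yp - yk, yh - yp⟫ - τ * ⟪K p1, yh - yp⟫ := by
      have e : yp - (yk + τ • K p1) = (yp - yk) - τ • K p1 := by module
      rw [e, inner_sub_left, real_inner_smul_left]
    have hs1' := hS1 yp hpv hyp_r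
    have hid2 : ⟪yp - yk, yh - yp⟫
        = (‖yk - yh‖ ^ 2 - ‖yk - yp‖ ^ 2 - ‖yp - yh‖ ^ 2) / 2 := by
      have hwork := my_inner_sub_id yk yp yh
      calc ⟪yp - yk, yh - yp⟫ = ⟪-(yk - yp), -(yp - yh)⟫ := by rw [neg_sub, neg_sub]
        _ = ⟪yk - yp, yp - yh⟫ := inner_neg_neg _ _
        _ = _ := hwork
    have hD' : ⟪K (p1 - xh), yh - yp⟫ ≤ B m - B (m + 1) - Q (m + 1) := by
      have h9 : τ * (Hh - hpv) ≤ τ * ⟪K xh, yh - yp⟫ := by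
        have e : ⟪K xh, yh⟫ - ⟪K xh, yp⟫ = ⟪K xh, yh - yp⟫ := by rw [inner_sub_right]
        have h9' : Hh - hpv ≤ ⟪K xh, yh - yp⟫ := by linarith
        exact mul_le_mul_of_nonneg_left h9' hτ.le
      have hKsub : ⟪K p1, yh - yp⟫ - ⟪K xh, yh - yp⟫ = ⟪K (p1 - xh), yh - yp⟫ := by
        rw [map_sub, inner_sub_left]
      have h10 : τ * ⟪K (p1 - xh), yh - yp⟫
          ≤ (‖yk - yh‖ ^ 2 - ‖yk - yp‖ ^ 2 - ‖yp - yh‖ ^ 2) / 2 := by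
        rw [hsplit2, hid2] at hvi
        nlinarith [hvi, h9, hKsub]
      have hQ1 : Q (m + 1) = ‖yp - yk‖ ^ 2 / (2 * τ) := by
        show ‖y (m + 1) - y (m + 1 - 1)‖ ^ 2 / (2 * τ) = _
        rw [show (m + 1 - 1 : ℤ) = m by ring]
      have hBQ : B m - B (m + 1) - Q (m + 1)
          = (‖yk - yh‖ ^ 2 - ‖yk - yp‖ ^ 2 - ‖yp - yh‖ ^ 2) / (2 * τ) := by
        rw [show B m = ‖yk - yh‖ ^ 2 / (2 * τ) from rfl,
          show B (m + 1) = ‖yp - yh‖ ^ 2 / (2 * τ) from rfl, hQ1, norm_sub_rev yp yk]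
        ring
      rw [hBQ, le_div_iff₀ (by positivity : (0:ℝ) < 2 * τ)]
      nlinarith [h10]
    -- combine primal and dual
    have hcomb : ⟪K (p1 - xh), yb - yp⟫
        ≤ (A m - A (m + 1) - nd m / (2 * σ) + E m) + (B m - B (m + 1) - Q (m + 1)) := by
      have e : ⟪K (p1 - xh), yb - yp⟫
          = ⟪K (p1 - xh), yb - yh⟫ + ⟪K (p1 - xh), yh - yp⟫ := by
        rw [← inner_add_right]
        congr 1
        abel
      rw [e]
      exact add_le_add hP' hD'
    have hsplit3 : ⟪K (p1 - xh), yb - yp⟫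
        = ⟪K (p1 - xh), yk - yp⟫ + ⟪K (p1 - xh), yk - ym⟫ := by
      rw [← inner_add_right]
      congr 1
      rw [hyb]
      module
    have hS_succ : S (m + 1) = ⟪K (p1 - xh), yk - yp⟫ := by
      show ⟪K (x (m + 1) - xh), y (m + 1 - 1) - y (m + 1)⟫ = _
      rw [show (m + 1 - 1 : ℤ) = m by ring]
    have hSm : ⟪K (p1 - xh), yk - ym⟫ = -(S m) - ⟪K (p1 - xk), ym - yk⟫ := by
      have e1 : ⟪K (p1 - xh), yk - ym⟫ = -⟪K (p1 - xh), ym - yk⟫ := by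
        rw [← inner_neg_right]
        congr 1
        abel
      have e2 : ⟪K (p1 - xh), ym - yk⟫
          = ⟪K (xk - xh), ym - yk⟫ + ⟪K (p1 - xk), ym - yk⟫ := by
        rw [← inner_add_left, ← map_add]
        congr 2
        abel
      have e3 : S m = ⟪K (xk - xh), ym - yk⟫ := rfl
      rw [e1, e2, e3]
      ring
    have hcross : ⟪K (p1 - xk), ym - yk⟫ ≤ β * (nd m / (2 * σ)) + β * Q m := by
      have hop := my_inner_op_le K (p1 - xk) (ym - yk)
      have hy1 := my_young1 (c := ‖K‖) (s := Real.sqrt σ) (t := Real.sqrt τ)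
        (a := ‖p1 - xk‖) (b := ‖ym - yk‖) (norm_nonneg K)
        (Real.sqrt_pos.2 hσ) (Real.sqrt_pos.2 hτ)
      rw [Real.sq_sqrt hσ.le, Real.sq_sqrt hτ.le] at hy1
      have hββ : β = ‖K‖ * Real.sqrt σ * Real.sqrt τ := by
        rw [hβ, Real.sqrt_mul hτ.le]
        ring
      have hnd' : nd m = ‖p1 - xk‖ ^ 2 := rfl
      have hQ' : Q m = ‖ym - yk‖ ^ 2 / (2 * τ) := by
        rw [show Q m = ‖yk - ym‖ ^ 2 / (2 * τ) from rfl, norm_sub_rev yk ym]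
      rw [hββ, hnd', hQ']
      calc ⟪K (p1 - xk), ym - yk⟫ ≤ ‖K‖ * ‖p1 - xk‖ * ‖ym - yk‖ := hop
        _ ≤ _ := by
            calc ‖K‖ * ‖p1 - xk‖ * ‖ym - yk‖
                ≤ ‖K‖ * Real.sqrt σ * Real.sqrt τ * (‖p1 - xk‖ ^ 2 / (2 * σ))
                  + ‖K‖ * Real.sqrt σ * Real.sqrt τ * (‖ym - yk‖ ^ 2 / (2 * τ)) := hy1
              _ = _ := by ring
    -- final assembly of the one-step inequality
    have hAe2 : A (m + 1) = ‖p1 - xh‖ ^ 2 / (2 * σ) := rfl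
    have hAe3 : A m = ‖xk - xh‖ ^ 2 / (2 * σ) := rfl
    have hBe2 : B (m + 1) = ‖yp - yh‖ ^ 2 / (2 * τ) := rfl
    have hBe3 : B m = ‖yk - yh‖ ^ 2 / (2 * τ) := rfl
    linarith [hcomb, hsplit3, hS_succ, hSm, hcross]
  -- telescoped estimate
  have hsum : ∀ n : ℕ, A (n : ℤ) + B (n : ℤ) + S (n : ℤ) + Q (n : ℤ) ≤ A 0 + B 0 := by
    intro n
    set U : ℕ → ℝ := fun k => A (k : ℤ) + B (k : ℤ) + S (k : ℤ) + Q (k : ℤ) with hU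
    have hstep' : ∀ k : ℕ, U (k + 1) - U k
        ≤ E (k : ℤ) - (1 - β) * (nd (k : ℤ) / (2 * σ)) - (1 - β) * Q (k : ℤ) := by
      intro k
      have h := hkey (k : ℤ) (Int.natCast_nonneg k)
      have e : (((k + 1 : ℕ)) : ℤ) = (k : ℤ) + 1 := by push_cast; ring
      have eU1 : U (k + 1) = A ((k : ℤ) + 1) + B ((k : ℤ) + 1) + S ((k : ℤ) + 1)
          + Q ((k : ℤ) + 1) := by
        rw [hU]
        simp only
        rw [e]
      have eU0 : U k = A (k : ℤ) + B (k : ℤ) + S (k : ℤ) + Q (k : ℤ) := rfl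
      rw [eU1, eU0]
      linarith [h, hndnn (k : ℤ)]
    have htel := Finset.sum_range_sub U n
    have hsb := Finset.sum_le_sum (fun k (_ : k ∈ Finset.range n) => hstep' k)
    rw [htel] at hsb
    have hsplitsum : ∑ k ∈ Finset.range n,
        (E (k : ℤ) - (1 - β) * (nd (k : ℤ) / (2 * σ)) - (1 - β) * Q (k : ℤ))
        = (∑ k ∈ Finset.range n, E (k : ℤ))
          - (1 - β) / (2 * σ) * (∑ k ∈ Finset.range n, nd (k : ℤ))
          - (1 - β) * (∑ k ∈ Finset.range n, Q (k : ℤ)) := by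
      rw [Finset.sum_sub_distrib, Finset.sum_sub_distrib, ← Finset.mul_sum, ← Finset.mul_sum]
      congr 2
      rw [Finset.mul_sum, Finset.mul_sum]
      apply Finset.sum_congr rfl
      intro k _
      ring
    rw [hsplitsum] at hsb
    have hE := hEsum n
    have hQs : 0 ≤ ∑ k ∈ Finset.range n, Q (k : ℤ) :=
      Finset.sum_nonneg fun k _ => hQnn _
    have hnds : 0 ≤ ∑ k ∈ Finset.range n, nd (k : ℤ) :=
      Finset.sum_nonneg fun k _ => hndnn _
    have hcoeff : LT * ((T : ℝ) + 1) ^ 2 / 2 - (1 - β) / (2 * σ) ≤ 0 := by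
      rw [sub_nonpos, div_le_div_iff₀ (by norm_num : (0:ℝ) < 2) (by positivity : (0:ℝ) < 2 * σ)]
      nlinarith [hstep]
    have h11 : (LT * ((T : ℝ) + 1) ^ 2 / 2 - (1 - β) / (2 * σ))
        * (∑ k ∈ Finset.range n, nd (k : ℤ)) ≤ 0 := by
      have := mul_le_mul_of_nonneg_right hcoeff hnds
      linarith [this]
    have h12 : 0 ≤ (1 - β) * (∑ k ∈ Finset.range n, Q (k : ℤ)) :=
      mul_nonneg (by linarith) hQs
    have hfin : U n ≤ U 0 := by
      revert hsb hE h11 h12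
      generalize U n = un
      generalize U 0 = u0
      generalize (∑ k ∈ Finset.range n, E (k : ℤ)) = se
      generalize (∑ k ∈ Finset.range n, nd (k : ℤ)) = snd
      generalize (∑ k ∈ Finset.range n, Q (k : ℤ)) = sq
      intro hsb hE h11 h12
      linarith
    have hU0 : U 0 = A 0 + B 0 := by
      have : U 0 = A (0 : ℤ) + B (0 : ℤ) + S (0 : ℤ) + Q (0 : ℤ) := by
        rw [hU]
        simp only
        norm_num
      rw [this, hS0, hQ0]
      ring
    have hUn : U n = A (n : ℤ) + B (n : ℤ) + S (n : ℤ) + Q (n : ℤ) := rfl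
    rw [hUn, hU0] at hfin
    exact hfin
  -- conclusion
  intro k hk
  obtain ⟨n, rfl⟩ : ∃ n : ℕ, k = (n : ℤ) := ⟨k.toNat, (Int.toNat_of_nonneg hk).symm⟩
  have hmain := hsum n
  have hySn : -(S (n : ℤ)) ≤ β ^ 2 * A (n : ℤ) + Q (n : ℤ) := by
    have habs := my_abs_inner_op_le K (x (n : ℤ) - xh) (y ((n : ℤ) - 1) - y (n : ℤ))
    have hSn : S (n : ℤ) = ⟪K (x (n : ℤ) - xh), y ((n : ℤ) - 1) - y (n : ℤ)⟫ := rfl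
    have hy := my_young2 (kk := ‖K‖) (τ := τ) (a := ‖x (n : ℤ) - xh‖)
      (b := ‖y ((n : ℤ) - 1) - y (n : ℤ)‖) (norm_nonneg K) hτ
    have hA' : A (n : ℤ) = ‖x (n : ℤ) - xh‖ ^ 2 / (2 * σ) := rfl
    have hQ' : Q (n : ℤ) = ‖y (n : ℤ) - y ((n : ℤ) - 1)‖ ^ 2 / (2 * τ) := rfl
    have hbb : β ^ 2 * A (n : ℤ) = τ * ‖K‖ ^ 2 * ‖x (n : ℤ) - xh‖ ^ 2 / 2 := by
      rw [hβsq, hA']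
      field_simp
    have hq2 : Q (n : ℤ) = ‖y ((n : ℤ) - 1) - y (n : ℤ)‖ ^ 2 / (2 * τ) := by
      rw [hQ', norm_sub_rev]
    rw [hSn, hbb, hq2]
    have hnegabs : -⟪K (x (n : ℤ) - xh), y ((n : ℤ) - 1) - y (n : ℤ)⟫
        ≤ ‖K‖ * ‖x (n : ℤ) - xh‖ * ‖y ((n : ℤ) - 1) - y (n : ℤ)‖ := by
      have := neg_abs_le (⟪K (x (n : ℤ) - xh), y ((n : ℤ) - 1) - y (n : ℤ)⟫)
      linarith [habs]
    linarith [hy, hnegabs]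
  have h13 : (1 - β ^ 2) * (A (n : ℤ) + B (n : ℤ)) ≤ A 0 + B 0 := by
    have h14 : (1 - β ^ 2) * A (n : ℤ) + B (n : ℤ) ≤ A 0 + B 0 := by nlinarith [hmain, hySn]
    nlinarith [mul_nonneg (sq_nonneg β) (hBnn (n : ℤ))]
  have hpos : 0 < 1 - β ^ 2 := by nlinarith [hβ0, hβ1]
  have hgoal : A (n : ℤ) + B (n : ℤ)
      ≤ (1 - τ * σ * ‖K‖ ^ 2)⁻¹ * (A 0 + B 0) := by
    rw [← hβsq, inv_mul_eq_div, le_div_iff₀ hpos]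
    linarith [h13]
  exact hgoal
end
end
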